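/- arXiv:2405.07958 — 8 statements merged into one kernel-verified Lean document; each statement's English description precedes it below -/
import Mathlib

section
/- For real numbers λ > 0, μ > 0, ν ∈ ℝ, and real β with |β| < 1, one has ∫₀¹ x^{λ−1} (1−x)^{μ−1} (1−βx)^{−ν} dx = B(λ,μ) · ∑_{i=0}^∞ ((ν)_i (λ)_i / (λ+μ)_i) · β^i / i!, where the series on the right converges. -/
open Polynomial Filter Topology Set Metric MeasureTheory intervalIntegral

lemma asc_abs_le (x : ℝ) (n : ℕ) :
    |(ascPochhammer ℝ n).eval x| ≤ (ascPochhammer ℝ n).eval (1 + |x|) := by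
  induction n with
  | zero => simp
  | succ n ih =>
    rw [ascPochhammer_succ_eval, ascPochhammer_succ_eval, abs_mul]
    have h1 : |x + n| ≤ 1 + |x| + n := by
      calc |x + n| ≤ |x| + n := by simpa using abs_add_le x n
      _ ≤ 1 + |x| + n := by linarith
    have h2 : (0:ℝ) ≤ (ascPochhammer ℝ n).eval (1 + |x|) :=
      (ascPochhammer_pos n _ (by positivity)).le
    exact mul_le_mul ih h1 (abs_nonneg _) h2

lemma aux_tendsto_ratio (a c : ℝ) :
    Tendsto (fun n : ℕ => (a + n) / (c + n)) atTop (𝓝 1) := by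
  have h0 : Tendsto (fun n : ℕ => (a - c) / (c + n)) atTop (𝓝 0) := by
    apply Tendsto.div_atTop (tendsto_const_nhds)
    exact tendsto_atTop_add_const_left _ _ tendsto_natCast_atTop_atTop
  have h1 : ∀ᶠ n : ℕ in atTop, 1 + (a - c) / (c + n) = (a + n) / (c + n) := by
    filter_upwards [eventually_gt_atTop (Nat.ceil |c|)] with n hn
    have hc : c + n ≠ 0 := by
      have : |c| < (n:ℝ) := lt_of_le_of_lt (Nat.le_ceil _) (by exact_mod_cast hn)
      have := neg_abs_le c
      nlinarith [abs_nonneg c]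
    field_simp
    ring
  have := (tendsto_const_nhds (x := (1:ℝ)) (f := atTop (α := ℕ))).add h0
  rw [add_zero] at this
  exact Tendsto.congr' h1 this

/-- master summability lemma -/
lemma key_summable (q1 q2 q3 : ℝ) (h1 : 0 < q1) (h2 : 0 < q2) (h3 : 0 < q3)
    {r : ℝ} (hr0 : 0 < r) (hr : r < 1) (k : ℕ) :
    Summable (fun n : ℕ => (ascPochhammer ℝ n).eval q1 * (ascPochhammer ℝ n).eval q2 /
      ((ascPochhammer ℝ n).eval q3 * (Nat.factorial n : ℝ)) * ((n:ℝ)+1) ^ k * r ^ n) := by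
  set f : ℕ → ℝ := fun n => (ascPochhammer ℝ n).eval q1 * (ascPochhammer ℝ n).eval q2 /
      ((ascPochhammer ℝ n).eval q3 * (Nat.factorial n : ℝ)) * ((n:ℝ)+1) ^ k * r ^ n with hf
  have hpos : ∀ n, 0 < f n := by
    intro n
    have := ascPochhammer_pos n q1 h1
    have := ascPochhammer_pos n q2 h2
    have := ascPochhammer_pos n q3 h3
    have : (0:ℝ) < (Nat.factorial n : ℝ) := by positivity
    positivity
  apply summable_of_ratio_test_tendsto_lt_one hr (Eventually.of_forall fun n => (hpos n).ne')
  have hratio : ∀ n : ℕ, ‖f (n+1)‖ / ‖f n‖ =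
      ((q1 + n) / ((n:ℝ) + 1)) * ((q2 + n) / (q3 + n)) * ((1+1/((n:ℝ)+1)) ^ k) * r := by
    intro n
    rw [Real.norm_eq_abs, Real.norm_eq_abs, abs_of_pos (hpos _), abs_of_pos (hpos _), hf]
    simp only
    rw [ascPochhammer_succ_eval, ascPochhammer_succ_eval, ascPochhammer_succ_eval,
      Nat.factorial_succ, pow_succ]
    have e1 := (ascPochhammer_pos n q1 h1).ne'
    have e2 := (ascPochhammer_pos n q2 h2).ne'
    have e3 := (ascPochhammer_pos n q3 h3).ne'
    have e4 : (Nat.factorial n : ℝ) ≠ 0 := by positivity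
    have e5 : ((n:ℝ) + 1) ≠ 0 := by positivity
    have e6 : q3 + n ≠ 0 := by positivity
    have e10 : r ^ n ≠ 0 := pow_ne_zero _ hr0.ne'
    have e11 : (1+1/((n:ℝ)+1)) = ((n:ℝ)+1+1)/((n:ℝ)+1) := by field_simp
    rw [e11, div_pow]
    push_cast
    field_simp
  rw [show (𝓝 r) = 𝓝 (1 * 1 * (1+0)^k * r) by norm_num]
  refine Tendsto.congr (fun n => (hratio n).symm) ?_
  refine Tendsto.mul_const r (Tendsto.mul (Tendsto.mul ?_ ?_) ?_)
  · have := aux_tendsto_ratio q1 1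
    refine this.congr fun n => by norm_num [add_comm]
  · exact aux_tendsto_ratio q2 q3
  · refine Tendsto.pow (tendsto_const_nhds.add ?_) k
    apply Tendsto.div_atTop (tendsto_const_nhds)
    exact tendsto_atTop_add_const_right _ _ tendsto_natCast_atTop_atTop


-- simplified dominator
lemma key_summable' (q : ℝ) (hq : 0 < q) {r : ℝ} (hr0 : 0 < r) (hr : r < 1) (k : ℕ) :
    Summable (fun n : ℕ => (ascPochhammer ℝ n).eval q / (Nat.factorial n : ℝ)
      * ((n:ℝ)+1) ^ k * r ^ n) := by
  have h := key_summable q 1 1 hq one_pos one_pos hr0 hr k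
  refine h.congr fun n => ?_
  have h1 : (ascPochhammer ℝ n).eval (1:ℝ) ≠ 0 := (ascPochhammer_pos n 1 one_pos).ne'
  field_simp

lemma binom_summable (v : ℝ) {y : ℝ} (hy : |y| < 1) :
    Summable (fun n : ℕ => (ascPochhammer ℝ n).eval v / (Nat.factorial n : ℝ) * y ^ n) := by
  set r : ℝ := (1 + |y|) / 2 with hr
  have hry : |y| < r := by rw [hr]; linarith
  have hr0 : 0 < r := lt_of_le_of_lt (abs_nonneg y) hry
  have hr1 : r < 1 := by rw [hr]; linarith
  refine Summable.of_norm_bounded (key_summable' (1 + |v|) (by positivity) hr0 hr1 0) ?_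
  intro n
  rw [pow_zero, mul_one, norm_mul, norm_div, norm_pow]
  have hf : (0:ℝ) < (Nat.factorial n : ℝ) := by positivity
  have h1 : ‖(ascPochhammer ℝ n).eval v‖ / ‖(Nat.factorial n : ℝ)‖
      ≤ (ascPochhammer ℝ n).eval (1 + |v|) / (Nat.factorial n : ℝ) := by
    rw [Real.norm_eq_abs, Real.norm_eq_abs, abs_of_pos hf]
    gcongr
    exact asc_abs_le v n
  have h2 : ‖y‖ ^ n ≤ r ^ n := by
    rw [Real.norm_eq_abs]
    exact pow_le_pow_left₀ (abs_nonneg y) hry.le n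
  have hw := ascPochhammer_pos n (1+|v|) (by positivity)
  exact mul_le_mul h1 h2 (pow_nonneg (norm_nonneg y) n) (by positivity)

lemma deriv_bound (v : ℝ) {x r : ℝ} (hx : |x| < r) (hr0 : 0 < r) (n : ℕ) :
    ‖(ascPochhammer ℝ n).eval v / (Nat.factorial n : ℝ) * ((n:ℝ) * x ^ (n - 1))‖ ≤
      (ascPochhammer ℝ n).eval (1 + |v|) / (Nat.factorial n : ℝ) * ((n:ℝ)+1) ^ 1 * r ^ n * r⁻¹ := by
  have hb1 : |(ascPochhammer ℝ n).eval v / (Nat.factorial n : ℝ)| ≤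
      (ascPochhammer ℝ n).eval (1 + |v|) / (Nat.factorial n : ℝ) := by
    rw [abs_div, Nat.abs_cast]
    gcongr
    exact asc_abs_le v n
  have hb1' : (0:ℝ) ≤ (ascPochhammer ℝ n).eval (1 + |v|) / (Nat.factorial n : ℝ) := by
    have := ascPochhammer_pos n (1+|v|) (by positivity)
    positivity
  have key : (n:ℝ) * |x| ^ (n - 1) ≤ ((n:ℝ)+1) ^ 1 * r ^ n * r⁻¹ := by
    rw [pow_one]
    rcases Nat.eq_zero_or_pos n with h0 | hpos
    · subst h0
      simp only [Nat.cast_zero, zero_mul]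
      positivity
    · have hn1 : n - 1 + 1 = n := Nat.succ_pred_eq_of_pos hpos
      have hx1 : |x| ^ (n-1) ≤ r ^ (n-1) :=
        pow_le_pow_left₀ (abs_nonneg x) hx.le _
      have hr2 : r ^ (n-1) = r ^ n * r⁻¹ := by
        rw [← hn1, pow_succ]
        field_simp
        simp
      calc (n:ℝ) * |x| ^ (n-1) ≤ (n:ℝ) * r ^ (n-1) := by gcongr
      _ = (n:ℝ) * (r ^ n * r⁻¹) := by rw [hr2]
      _ ≤ ((n:ℝ)+1) * (r ^ n * r⁻¹) := by
            have h3 : (0:ℝ) ≤ r ^ n * r⁻¹ := by positivity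
            nlinarith [Nat.cast_nonneg (α := ℝ) n]
      _ = ((n:ℝ)+1) * r ^ n * r⁻¹ := by ring
  calc ‖(ascPochhammer ℝ n).eval v / (Nat.factorial n : ℝ) * ((n:ℝ) * x ^ (n-1))‖
      = |(ascPochhammer ℝ n).eval v / (Nat.factorial n : ℝ)| * ((n:ℝ) * |x| ^ (n-1)) := by
        rw [Real.norm_eq_abs, abs_mul, abs_mul, Nat.abs_cast, abs_pow]
  _ ≤ ((ascPochhammer ℝ n).eval (1 + |v|) / (Nat.factorial n : ℝ))
        * (((n:ℝ)+1) ^ 1 * r ^ n * r⁻¹) := mul_le_mul hb1 key (by positivity) hb1'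
  _ = (ascPochhammer ℝ n).eval (1 + |v|) / (Nat.factorial n : ℝ) * ((n:ℝ)+1) ^ 1 * r ^ n * r⁻¹ := by
        ring

lemma binom_hasSum (v : ℝ) {y : ℝ} (hy : |y| < 1) :
    HasSum (fun n : ℕ => (ascPochhammer ℝ n).eval v / (Nat.factorial n : ℝ) * y ^ n)
      ((1 - y) ^ (-v)) := by
  set c : ℕ → ℝ := fun n => (ascPochhammer ℝ n).eval v / (Nat.factorial n : ℝ) with hc
  set F : ℝ → ℝ := fun z => ∑' n, c n * z ^ n with hF
  set G : ℝ → ℝ := fun z => ∑' n, c n * ((n:ℝ) * z ^ (n - 1)) with hG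
  have csucc : ∀ n : ℕ, c (n + 1) * ((n:ℝ) + 1) = (v + n) * c n := by
    intro n
    rw [hc]
    simp only
    rw [ascPochhammer_succ_eval, Nat.factorial_succ]
    have : (Nat.factorial n : ℝ) ≠ 0 := by positivity
    have : ((n:ℝ) + 1) ≠ 0 := by positivity
    push_cast
    field_simp
  -- differentiability on (-1,1)
  have hderiv : ∀ y : ℝ, |y| < 1 → HasDerivAt F (G y) y := by
    intro y hy
    set r : ℝ := (1 + |y|) / 2 with hr
    have hry : |y| < r := by rw [hr]; linarith
    have hr0 : 0 < r := lt_of_le_of_lt (abs_nonneg y) hry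
    have hr1 : r < 1 := by rw [hr]; linarith
    set u : ℕ → ℝ := fun n => (ascPochhammer ℝ n).eval (1 + |v|) / (Nat.factorial n : ℝ)
        * ((n:ℝ)+1) ^ 1 * r ^ n * r⁻¹ with hu'
    have hu : Summable u :=
      (key_summable' (1 + |v|) (by positivity) hr0 hr1 1).mul_right r⁻¹
    have hpre : IsPreconnected (ball (0:ℝ) r) := (convex_ball (0:ℝ) r).isPreconnected
    have hg : ∀ (n : ℕ) (x : ℝ), x ∈ ball (0:ℝ) r →
        HasDerivAt (fun z : ℝ => c n * z ^ n) (c n * ((n:ℝ) * x ^ (n - 1))) x :=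
      fun n x _ => (hasDerivAt_pow n x).const_mul (c n)
    have hg' : ∀ (n : ℕ) (x : ℝ), x ∈ ball (0:ℝ) r →
        ‖c n * ((n:ℝ) * x ^ (n - 1))‖ ≤ u n := by
      intro n x hx
      rw [mem_ball_zero_iff, Real.norm_eq_abs] at hx
      exact deriv_bound v hx hr0 n
    have hy0 : (0:ℝ) ∈ ball (0:ℝ) r := mem_ball_self hr0
    have hg0 : Summable (fun n => c n * (0:ℝ) ^ n) := by
      refine summable_of_ne_finset_zero (s := {0}) fun n hn => ?_
      have : n ≠ 0 := by simpa using hn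
      simp [zero_pow this]
    have hym : y ∈ ball (0:ℝ) r := by rwa [mem_ball_zero_iff, Real.norm_eq_abs]
    exact hasDerivAt_tsum_of_isPreconnected hu isOpen_ball hpre hg hg' hy0 hg0 hym
  -- the ODE identity
  have hFsum : ∀ y : ℝ, |y| < 1 → HasSum (fun n => c n * y ^ n) (F y) := by
    intro y hy
    exact ((binom_summable v hy).congr fun n => by rw [hc]).hasSum
  have hkey : ∀ y : ℝ, |y| < 1 → G y * (1 - y) = v * F y := by
    intro y hy
    set r : ℝ := (1 + |y|) / 2 with hr
    have hry : |y| < r := by rw [hr]; linarith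
    have hr0 : 0 < r := lt_of_le_of_lt (abs_nonneg y) hry
    have hr1 : r < 1 := by rw [hr]; linarith
    have sumG : Summable (fun n => c n * ((n:ℝ) * y ^ (n - 1))) := by
      refine Summable.of_norm_bounded
        ((key_summable' (1 + |v|) (by positivity) hr0 hr1 1).mul_right r⁻¹) ?_
      intro n
      exact deriv_bound v hry hr0 n
    have hG' : HasSum (fun n => c n * ((n:ℝ) * y ^ (n - 1))) (G y) := sumG.hasSum
    have hGy : HasSum (fun n : ℕ => (n:ℝ) * c n * y ^ n) (G y * y) := by
      have := hG'.mul_right y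
      refine this.congr_fun fun n => ?_
      cases n with
      | zero => simp
      | succ m =>
        simp only [Nat.add_sub_cancel]
        push_cast
        ring
    have hshift : HasSum (fun n => (v + n) * c n * y ^ n) (G y) := by
      have h0 := (hasSum_nat_add_iff' (f := fun n => c n * ((n:ℝ) * y ^ (n - 1))) 1).mpr hG'
      simp only [Finset.range_one, Finset.sum_singleton, Nat.cast_zero, Nat.zero_sub,
        Nat.cast_ofNat] at h0
      have h0' : G y - c 0 * ((0:ℝ) * y ^ (0 - 1)) = G y := by ring_nf
      rw [h0'] at h0
      refine h0.congr_fun fun n => ?_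
      simp only [Nat.add_sub_cancel]
      push_cast
      linear_combination (-(y ^ n)) * csucc n
    have hsub := hshift.sub hGy
    have heq : (fun n => (v + n) * c n * y ^ n - (n:ℝ) * c n * y ^ n)
        = fun n => v * (c n * y ^ n) := by funext n; ring
    rw [heq] at hsub
    have := (hFsum y hy).mul_left v
    have h2 := hsub.unique this
    linarith [h2]
  -- derivative of Φ is 0
  set Φ : ℝ → ℝ := fun z => F z * (1 - z) ^ v with hΦdef
  have hΦ : ∀ y : ℝ, |y| < 1 → HasDerivAt Φ 0 y := by
    intro y hy
    have h1y : (0:ℝ) < 1 - y := by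
      have := abs_lt.mp hy
      linarith [this.2]
    have hrpow : HasDerivAt (fun z : ℝ => (1 - z) ^ v) (v * (1 - y) ^ (v - 1) * (-1)) y := by
      have houter := Real.hasDerivAt_rpow_const (x := 1 - y) (p := v) (Or.inl h1y.ne')
      have hinner : HasDerivAt (fun z : ℝ => 1 - z) (-1) y := (hasDerivAt_id y).const_sub 1
      exact houter.comp y hinner
    have hmul := (hderiv y hy).mul hrpow
    have hpow : (1 - y) ^ v = (1 - y) ^ (v - 1) * (1 - y) := by
      rw [← Real.rpow_add_one h1y.ne' (v-1)]
      ring_nf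
    have hzero : G y * (1 - y) ^ v + F y * (v * (1 - y) ^ (v - 1) * (-1)) = 0 := by
      rw [hpow]
      linear_combination (1 - y) ^ (v - 1) * (hkey y hy)
    rwa [hzero] at hmul
  -- constancy
  have hΦ0 : Φ 0 = 1 := by
    rw [hΦdef]
    simp only
    have hF0 : F 0 = 1 := by
      rw [hF]
      simp only
      rw [tsum_eq_single 0 (fun n hn => by simp [zero_pow hn])]
      simp [hc]
    rw [hF0, sub_zero, Real.one_rpow, one_mul]
  have hconst : ∀ y : ℝ, |y| < 1 → Φ y = 1 := by
    intro y hy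
    have hmem : ∀ x : ℝ, x ∈ Set.Icc (min y 0) (max y 0) → |x| < 1 := by
      intro x hx
      rcases abs_lt.mp hy with ⟨h1, h2⟩
      rcases hx with ⟨ha, hb⟩
      rw [abs_lt]
      constructor
      · rcases le_or_gt y 0 with h | h
        · have : min y 0 = y := min_eq_left h
          rw [this] at ha; linarith
        · have : min y 0 = 0 := min_eq_right h.le
          rw [this] at ha; linarith
      · rcases le_or_gt y 0 with h | h
        · have : max y 0 = 0 := max_eq_right h
          rw [this] at hb; linarith
        · have : max y 0 = y := max_eq_left h.le
          rw [this] at hb; linarith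
    have hcont : ContinuousOn Φ (Set.Icc (min y 0) (max y 0)) := fun x hx =>
      ((hΦ x (hmem x hx)).continuousAt).continuousWithinAt
    have hder : ∀ x ∈ Set.Ico (min y 0) (max y 0), HasDerivWithinAt Φ 0 (Set.Ici x) x :=
      fun x hx => (hΦ x (hmem x ⟨hx.1, hx.2.le⟩)).hasDerivWithinAt
    have hres := constant_of_has_deriv_right_zero hcont hder
    have hy' : y ∈ Set.Icc (min y 0) (max y 0) := ⟨min_le_left y 0, le_max_left y 0⟩
    have h0' : (0:ℝ) ∈ Set.Icc (min y 0) (max y 0) := ⟨min_le_right y 0, le_max_right y 0⟩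
    have := hres y hy'
    have h2 := hres 0 h0'
    rw [this, ← h2, hΦ0]
  -- conclude
  have h1y : (0:ℝ) < 1 - y := by
    have := abs_lt.mp hy
    linarith [this.2]
  have hval : F y = (1 - y) ^ (-v) := by
    have h := hconst y hy
    rw [hΦdef] at h
    simp only at h
    rw [Real.rpow_neg h1y.le]
    exact eq_inv_of_mul_eq_one_left h
  have := hFsum y hy
  rwa [hval] at this


noncomputable def rB (a b : ℝ) : ℝ := ∫ x in (0:ℝ)..1, x ^ (a-1) * (1-x) ^ (b-1)

lemma rB_complex (a b : ℝ) : Complex.betaIntegral a b = (rB a b : ℂ) := by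
  rw [Complex.betaIntegral, rB, ← intervalIntegral.integral_ofReal]
  refine intervalIntegral.integral_congr fun x hx => ?_
  rw [uIcc_of_le zero_le_one] at hx
  have e1 : (((x:ℝ) ^ (a-1) : ℝ) : ℂ) = (x:ℂ) ^ ((a:ℂ) - 1) := by
    rw [Complex.ofReal_cpow hx.1]
    norm_num
  have e2 : (((1 - x) ^ (b-1) : ℝ) : ℂ) = (1 - (x:ℂ)) ^ ((b:ℂ) - 1) := by
    rw [Complex.ofReal_cpow (by linarith [hx.2] : (0:ℝ) ≤ 1 - x)]
    push_cast
    norm_num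
  push_cast
  rw [← e1, ← e2]


lemma rB_intervalIntegrable {a b : ℝ} (ha : 0 < a) (hb : 0 < b) :
    IntervalIntegrable (fun x : ℝ => x ^ (a-1) * (1-x) ^ (b-1)) volume 0 1 := by
  have h := Complex.betaIntegral_convergent (u := (a:ℂ)) (v := (b:ℂ)) (by simpa) (by simpa)
  rw [intervalIntegrable_iff_integrableOn_Ioc_of_le zero_le_one] at h ⊢
  have : (fun x : ℝ => x ^ (a-1) * (1-x) ^ (b-1)) =ᵐ[volume.restrict (Ioc (0:ℝ) 1)]
      (fun x : ℝ => ((x:ℂ) ^ ((a:ℂ)-1) * (1 - (x:ℂ)) ^ ((b:ℂ)-1)).re) := by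
    refine (ae_restrict_iff' measurableSet_Ioc).mpr (Filter.Eventually.of_forall fun x hx => ?_)
    have e1 : (((x:ℝ) ^ (a-1) : ℝ) : ℂ) = (x:ℂ) ^ ((a:ℂ) - 1) := by
      rw [Complex.ofReal_cpow hx.1.le]; norm_num
    have e2 : (((1 - x) ^ (b-1) : ℝ) : ℂ) = (1 - (x:ℂ)) ^ ((b:ℂ) - 1) := by
      rw [Complex.ofReal_cpow (by linarith [hx.2] : (0:ℝ) ≤ 1 - x)]
      push_cast; norm_num
    show x ^ (a-1) * (1-x) ^ (b-1) = ((x:ℂ) ^ ((a:ℂ)-1) * (1 - (x:ℂ)) ^ ((b:ℂ)-1)).re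
    rw [← e1, ← e2, ← Complex.ofReal_mul, Complex.ofReal_re]
  exact (Integrable.re h).congr this.symm

lemma rB_add (a b : ℝ) (ha : 0 < a) (hb : 0 < b) :
    rB a b = rB (a+1) b + rB a (b+1) := by
  have i1 : IntervalIntegrable (fun x : ℝ => x ^ a * (1-x) ^ (b-1)) volume 0 1 := by
    have := rB_intervalIntegrable (by linarith : (0:ℝ) < a + 1) hb
    simpa using this
  have i2 : IntervalIntegrable (fun x : ℝ => x ^ (a-1) * (1-x) ^ b) volume 0 1 := by
    have := rB_intervalIntegrable ha (by linarith : (0:ℝ) < b + 1)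
    simpa using this
  have h3 : rB (a+1) b = ∫ x in (0:ℝ)..1, x ^ a * (1-x) ^ (b-1) := by
    rw [rB]; norm_num
  have h4 : rB a (b+1) = ∫ x in (0:ℝ)..1, x ^ (a-1) * (1-x) ^ b := by
    rw [rB]; norm_num
  rw [rB, h3, h4, ← intervalIntegral.integral_add i1 i2]
  rw [intervalIntegral.integral_of_le zero_le_one, intervalIntegral.integral_of_le zero_le_one,
    integral_Ioc_eq_integral_Ioo, integral_Ioc_eq_integral_Ioo]
  refine setIntegral_congr_fun measurableSet_Ioo fun x hx => ?_
  have hx0 : (0:ℝ) < x := hx.1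
  have hx1 : (0:ℝ) < 1 - x := by linarith [hx.2]
  have e1 : x ^ a = x ^ (a-1) * x := by
    rw [← Real.rpow_add_one hx0.ne' (a-1)]; ring_nf
  have e2 : (1-x) ^ b = (1-x) ^ (b-1) * (1-x) := by
    rw [← Real.rpow_add_one hx1.ne' (b-1)]; ring_nf
  rw [e1, e2]; ring

lemma rB_rec (a b : ℝ) (ha : 0 < a) (hb : 0 < b) :
    rB (a+1) b = a / (a+b) * rB a b := by
  have hrec := Complex.betaIntegral_recurrence (u := (a:ℂ)) (v := (b:ℂ)) (by simpa) (by simpa)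
  have hc1 := rB_complex a (b+1)
  have hc2 := rB_complex (a+1) b
  push_cast at hc1 hc2
  rw [hc1, hc2] at hrec
  have hrec' : a * rB a (b+1) = b * rB (a+1) b := by exact_mod_cast hrec
  have hadd := rB_add a b ha hb
  have hab : a + b ≠ 0 := by positivity
  have hbne : b ≠ 0 := hb.ne'
  have hane : a ≠ 0 := ha.ne'
  -- from hrec': rB a (b+1) = (b/a) * rB (a+1) b
  have h1 : rB a (b+1) = b / a * rB (a+1) b := by
    field_simp
    linarith [hrec']
  rw [h1] at hadd
  field_simp at hadd ⊢
  linarith [hadd]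

lemma rB_shift (lam mu : ℝ) (hlam : 0 < lam) (hmu : 0 < mu) (i : ℕ) :
    rB (lam + i) mu = (ascPochhammer ℝ i).eval lam / (ascPochhammer ℝ i).eval (lam + mu)
      * rB lam mu := by
  induction i with
  | zero => simp
  | succ n ih =>
    have hln : (0:ℝ) < lam + n := by positivity
    have hrec := rB_rec (lam + n) mu hln hmu
    have e : lam + (↑(n+1):ℝ) = (lam + n) + 1 := by push_cast; ring
    rw [e, hrec, ih, ascPochhammer_succ_eval, ascPochhammer_succ_eval]
    have h1 := (ascPochhammer_pos n lam hlam).ne'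
    have h2 := (ascPochhammer_pos n (lam+mu) (by positivity)).ne'
    have h3 : lam + mu + (n:ℝ) ≠ 0 := by positivity
    have h4 : lam + (n:ℝ) + mu ≠ 0 := by positivity
    field_simp
    ring



/-- **Lemma 1 (Euler-type integral for the Gauss hypergeometric function).**
For `λ > 0`, `μ > 0`, `ν ∈ ℝ` and `|β| < 1`,
`∫₀¹ x^{λ-1} (1-x)^{μ-1} (1-βx)^{-ν} dx = B(λ,μ) · ₂F₁(ν,λ;λ+μ;β)`,
where `B(λ,μ) = ∫₀¹ t^{λ-1}(1-t)^{μ-1} dt` and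
`₂F₁(ν,λ;λ+μ;β) = ∑_{i=0}^∞ ((ν)_i (λ)_i / (λ+μ)_i) β^i / i!`
(with `(a)_i` the rising factorial), the series being convergent. -/
theorem rtuomg_lemma1 (lam mu nu b : ℝ) (hlam : 0 < lam) (hmu : 0 < mu)
    (hb : |b| < 1) :
    Summable (fun i : ℕ =>
      ((ascPochhammer ℝ i).eval nu * (ascPochhammer ℝ i).eval lam /
        (ascPochhammer ℝ i).eval (lam + mu)) * b ^ i / (Nat.factorial i : ℝ)) ∧
    (∫ x in (0:ℝ)..1, x ^ (lam - 1) * (1 - x) ^ (mu - 1) * (1 - b * x) ^ (-nu)) =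
      (∫ t in (0:ℝ)..1, t ^ (lam - 1) * (1 - t) ^ (mu - 1)) *
        ∑' i : ℕ,
          ((ascPochhammer ℝ i).eval nu * (ascPochhammer ℝ i).eval lam /
            (ascPochhammer ℝ i).eval (lam + mu)) * b ^ i / (Nat.factorial i : ℝ) := by
  set r : ℝ := (1 + |b|) / 2 with hr
  have hrb : |b| < r := by rw [hr]; linarith
  have hr0 : 0 < r := lt_of_le_of_lt (abs_nonneg b) hrb
  have hr1 : r < 1 := by rw [hr]; linarith
  have hlm : (0:ℝ) < lam + mu := by positivity
  -- summability
  have hsummable : Summable (fun i : ℕ =>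
      ((ascPochhammer ℝ i).eval nu * (ascPochhammer ℝ i).eval lam /
        (ascPochhammer ℝ i).eval (lam + mu)) * b ^ i / (Nat.factorial i : ℝ)) := by
    refine Summable.of_norm_bounded
      (key_summable (1 + |nu|) lam (lam + mu) (by positivity) hlam hlm hr0 hr1 0) ?_
    intro n
    rw [pow_zero, mul_one]
    have p1 := ascPochhammer_pos n lam hlam
    have p2 := ascPochhammer_pos n (lam + mu) hlm
    have pf : (0:ℝ) < (Nat.factorial n : ℝ) := by positivity
    have habs : ‖((ascPochhammer ℝ n).eval nu * (ascPochhammer ℝ n).eval lam /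
          (ascPochhammer ℝ n).eval (lam + mu)) * b ^ n / (Nat.factorial n : ℝ)‖
        = |(ascPochhammer ℝ n).eval nu| * (ascPochhammer ℝ n).eval lam /
          (ascPochhammer ℝ n).eval (lam + mu) * |b| ^ n / (Nat.factorial n : ℝ) := by
      rw [Real.norm_eq_abs, abs_div, abs_mul, abs_div, abs_mul, abs_pow, Nat.abs_cast,
        abs_of_pos p1, abs_of_pos p2]
    rw [habs]
    calc |(ascPochhammer ℝ n).eval nu| * (ascPochhammer ℝ n).eval lam /
          (ascPochhammer ℝ n).eval (lam + mu) * |b| ^ n / (Nat.factorial n : ℝ)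
        ≤ (ascPochhammer ℝ n).eval (1 + |nu|) * (ascPochhammer ℝ n).eval lam /
          (ascPochhammer ℝ n).eval (lam + mu) * r ^ n / (Nat.factorial n : ℝ) := by
          gcongr <;> first
            | exact asc_abs_le nu n
            | exact abs_nonneg b
            | exact hrb.le
            | exact div_nonneg (mul_nonneg
                (ascPochhammer_pos n (1 + |nu|) (by positivity)).le p1.le) p2.le
            | positivity
    _ = (ascPochhammer ℝ n).eval (1 + |nu|) * (ascPochhammer ℝ n).eval lam /
          ((ascPochhammer ℝ n).eval (lam + mu) * (Nat.factorial n : ℝ)) * r ^ n := by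
          field_simp
  refine ⟨hsummable, ?_⟩
  -- the integral identity
  set c : ℕ → ℝ := fun i => (ascPochhammer ℝ i).eval nu / (Nat.factorial i : ℝ) with hc
  set f : ℕ → ℝ → ℝ := fun i x => c i * b ^ i * (x ^ (lam + i - 1) * (1-x) ^ (mu - 1)) with hf
  have hInt : ∀ i : ℕ, IntegrableOn (f i) (Ioo (0:ℝ) 1) volume := by
    intro i
    have h0 : (0:ℝ) < lam + i := by positivity
    have h1 := rB_intervalIntegrable (a := lam + i) (b := mu) h0 hmu
    rw [intervalIntegrable_iff_integrableOn_Ioc_of_le zero_le_one] at h1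
    have h2 : IntegrableOn (fun x : ℝ => x ^ (lam + i - 1) * (1-x) ^ (mu - 1)) (Ioo (0:ℝ) 1)
        volume := (h1.mono_set Ioo_subset_Ioc_self)
    exact h2.const_mul _
  have hmeas : ∀ i : ℕ, AEStronglyMeasurable (f i)
      (volume.restrict (Ioo (0:ℝ) 1)) := by
    intro i
    refine ContinuousOn.aestronglyMeasurable ?_ measurableSet_Ioo
    intro x hx
    have hx0 : x ≠ 0 := hx.1.ne'
    have hx1 : (1:ℝ) - x ≠ 0 := by
      have := hx.2
      intro h
      have : x = 1 := by linarith
      linarith [hx.2]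
    refine (ContinuousAt.continuousWithinAt ?_)
    refine ContinuousAt.mul continuousAt_const (ContinuousAt.mul ?_ ?_)
    · exact Real.continuousAt_rpow_const x _ (Or.inl hx0)
    · exact ContinuousAt.comp (Real.continuousAt_rpow_const _ _ (Or.inl hx1))
        (continuousAt_const.sub continuousAt_id)
  have hrB_eq : ∀ i : ℕ, ∫ x in Ioo (0:ℝ) 1, x ^ (lam + i - 1) * (1-x) ^ (mu - 1)
      = rB (lam + i) mu := by
    intro i
    rw [rB, intervalIntegral.integral_of_le zero_le_one, integral_Ioc_eq_integral_Ioo]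
  have hrB_nonneg : ∀ a' : ℝ, 0 ≤ rB a' mu := by
    intro a'
    refine intervalIntegral.integral_nonneg zero_le_one fun x hx => ?_
    have h1 : (0:ℝ) ≤ x := hx.1
    have h2 : (0:ℝ) ≤ 1 - x := by linarith [hx.2]
    positivity
  have hnorm_int : ∀ i : ℕ, ∫ x in Ioo (0:ℝ) 1, ‖f i x‖
      = |c i * b ^ i| * rB (lam + i) mu := by
    intro i
    rw [← hrB_eq i, ← MeasureTheory.integral_const_mul]
    refine setIntegral_congr_fun measurableSet_Ioo fun x hx => ?_
    have h1 : (0:ℝ) ≤ x := hx.1.le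
    have h2 : (0:ℝ) ≤ 1 - x := by linarith [hx.2.le]
    rw [hf]
    simp only
    rw [Real.norm_eq_abs, abs_mul, abs_mul, abs_mul, abs_of_nonneg (Real.rpow_nonneg h1 _),
      abs_of_nonneg (Real.rpow_nonneg h2 _)]
  have hshift : ∀ i : ℕ, rB (lam + i) mu = (ascPochhammer ℝ i).eval lam /
      (ascPochhammer ℝ i).eval (lam + mu) * rB lam mu := fun i => rB_shift lam mu hlam hmu i
  -- summability of the L¹-norms
  have hw_sum : Summable (fun i : ℕ => |c i * b ^ i| * rB (lam + i) mu) := by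
    refine Summable.of_nonneg_of_le (fun i => mul_nonneg (abs_nonneg _) (hrB_nonneg _)) ?_
      (((key_summable (1 + |nu|) lam (lam + mu) (by positivity) hlam hlm hr0 hr1 0).mul_right
        (rB lam mu)))
    intro n
    rw [hshift n, hc]
    simp only
    have p1 := ascPochhammer_pos n lam hlam
    have p2 := ascPochhammer_pos n (lam + mu) hlm
    have pf : (0:ℝ) < (Nat.factorial n : ℝ) := by positivity
    have hB := hrB_nonneg lam
    rw [abs_mul, abs_div, abs_pow, Nat.abs_cast]
    calc |(ascPochhammer ℝ n).eval nu| / (Nat.factorial n : ℝ) * |b| ^ n *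
          ((ascPochhammer ℝ n).eval lam / (ascPochhammer ℝ n).eval (lam + mu) * rB lam mu)
        ≤ (ascPochhammer ℝ n).eval (1 + |nu|) / (Nat.factorial n : ℝ) * r ^ n *
          ((ascPochhammer ℝ n).eval lam / (ascPochhammer ℝ n).eval (lam + mu) * rB lam mu) := by
          gcongr <;> first
            | exact asc_abs_le nu n
            | exact abs_nonneg b
            | exact hrb.le
            | exact div_nonneg (ascPochhammer_pos n (1 + |nu|) (by positivity)).le pf.le
            | exact mul_nonneg (div_nonneg p1.le p2.le) hB
            | positivity
    _ = (ascPochhammer ℝ n).eval (1 + |nu|) * (ascPochhammer ℝ n).eval lam /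
          ((ascPochhammer ℝ n).eval (lam + mu) * (Nat.factorial n : ℝ)) * ((n:ℝ)+1) ^ 0 * r ^ n *
          rB lam mu := by
          rw [pow_zero]
          field_simp
  -- interchange
  have hinterchange : (∫ x in Ioo (0:ℝ) 1, ∑' i, f i x) = ∑' i, ∫ x in Ioo (0:ℝ) 1, f i x := by
    refine MeasureTheory.integral_tsum hmeas ?_
    have hlin : ∀ i : ℕ, (∫⁻ x in Ioo (0:ℝ) 1, ‖f i x‖ₑ)
        = ENNReal.ofReal (|c i * b ^ i| * rB (lam + i) mu) := by
      intro i
      rw [← hnorm_int i, ← ofReal_integral_norm_eq_lintegral_enorm (hInt i)]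
    rw [show (∑' i, ∫⁻ x in Ioo (0:ℝ) 1, ‖f i x‖ₑ)
        = ∑' i, ENNReal.ofReal (|c i * b ^ i| * rB (lam + i) mu) from tsum_congr hlin,
      ← ENNReal.ofReal_tsum_of_nonneg
        (fun i => mul_nonneg (abs_nonneg _) (hrB_nonneg _)) hw_sum]
    exact ENNReal.ofReal_ne_top
  -- pointwise expansion of the integrand
  have hpoint : ∀ x ∈ Ioo (0:ℝ) 1,
      x ^ (lam - 1) * (1 - x) ^ (mu - 1) * (1 - b * x) ^ (-nu) = ∑' i, f i x := by
    intro x hx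
    have hx0 : (0:ℝ) < x := hx.1
    have hx1 : x < 1 := hx.2
    have hbx : |b * x| < 1 := by
      rw [abs_mul, abs_of_pos hx0]
      nlinarith [abs_nonneg b]
    have hs := (binom_hasSum nu hbx).tsum_eq
    rw [← hs, ← tsum_mul_left]
    refine tsum_congr fun i => ?_
    rw [hf, hc]
    simp only
    have e1 : x ^ (lam + i - 1) = x ^ (lam - 1) * x ^ (i:ℕ) := by
      rw [← Real.rpow_natCast x i, ← Real.rpow_add hx0]
      ring_nf
    rw [e1, mul_pow]
    ring
  -- final computation
  have hterm : ∀ i : ℕ, (∫ x in Ioo (0:ℝ) 1, f i x) = rB lam mu *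
      (((ascPochhammer ℝ i).eval nu * (ascPochhammer ℝ i).eval lam /
        (ascPochhammer ℝ i).eval (lam + mu)) * b ^ i / (Nat.factorial i : ℝ)) := by
    intro i
    rw [hf]
    simp only
    rw [MeasureTheory.integral_const_mul, hrB_eq i, hshift i, hc]
    simp only
    ring
  calc (∫ x in (0:ℝ)..1, x ^ (lam - 1) * (1 - x) ^ (mu - 1) * (1 - b * x) ^ (-nu))
      = ∫ x in Ioo (0:ℝ) 1, x ^ (lam - 1) * (1 - x) ^ (mu - 1) * (1 - b * x) ^ (-nu) := by
        rw [intervalIntegral.integral_of_le zero_le_one, integral_Ioc_eq_integral_Ioo]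
  _ = ∫ x in Ioo (0:ℝ) 1, ∑' i, f i x :=
        setIntegral_congr_fun measurableSet_Ioo hpoint
  _ = ∑' i, ∫ x in Ioo (0:ℝ) 1, f i x := hinterchange
  _ = ∑' i, rB lam mu * (((ascPochhammer ℝ i).eval nu * (ascPochhammer ℝ i).eval lam /
        (ascPochhammer ℝ i).eval (lam + mu)) * b ^ i / (Nat.factorial i : ℝ)) :=
        tsum_congr hterm
  _ = rB lam mu * ∑' i, (((ascPochhammer ℝ i).eval nu * (ascPochhammer ℝ i).eval lam /
        (ascPochhammer ℝ i).eval (lam + mu)) * b ^ i / (Nat.factorial i : ℝ)) := tsum_mul_left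
  _ = (∫ t in (0:ℝ)..1, t ^ (lam - 1) * (1 - t) ^ (mu - 1)) *
        ∑' i : ℕ, (((ascPochhammer ℝ i).eval nu * (ascPochhammer ℝ i).eval lam /
          (ascPochhammer ℝ i).eval (lam + mu)) * b ^ i / (Nat.factorial i : ℝ)) := rfl
end

section
/- Let α > 0, β > 0, p ∈ [0,1], and x ∈ (0,1). Then the RTUOMG distribution function F is differentiable at x with derivative equal to the RTUOMG density f(x); that is, the map t ↦ 1 − ω(t) + p·ω(t)·log ω(t) has derivative (2αβ x^{β−1}/(1 − x^{2β}))·ω(x)·(1 − p − p·log ω(x)) at x. -/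
/-- The omega function `ω(x) = ((1 + x^β)/(1 - x^β))^{-α}` on `(0,1)`. -/
noncomputable def omegaFn (α β x : ℝ) : ℝ := ((1 + x ^ β) / (1 - x ^ β)) ^ (-α)

/-- The RTUOMG cumulative distribution function
`F(x) = 1 - ω(x) + p ω(x) log ω(x)`. -/
noncomputable def rtuomgCDF (α β p x : ℝ) : ℝ :=
  1 - omegaFn α β x + p * omegaFn α β x * Real.log (omegaFn α β x)

/-- The RTUOMG probability density function
`f(x) = (2αβ x^{β-1}/(1 - x^{2β})) ω(x) (1 - p - p log ω(x))`. -/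
noncomputable def rtuomgPDF (α β p x : ℝ) : ℝ :=
  2 * α * β * x ^ (β - 1) / (1 - x ^ (2 * β)) * omegaFn α β x *
    (1 - p - p * Real.log (omegaFn α β x))

/-- **The RTUOMG distribution function has the RTUOMG density as derivative.**
For `α > 0`, `β > 0`, `p ∈ [0,1]` and `x ∈ (0,1)`, the map
`t ↦ 1 - ω(t) + p ω(t) log ω(t)` is differentiable at `x` with derivative
`(2αβ x^{β-1}/(1-x^{2β})) ω(x) (1 - p - p log ω(x))`. -/
theorem rtuomg_hasDerivAt_cdf (α β p x : ℝ) (hα : 0 < α) (hβ : 0 < β)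
    (hp : p ∈ Set.Icc (0:ℝ) 1) (hx : x ∈ Set.Ioo (0:ℝ) 1) :
    HasDerivAt (fun t => rtuomgCDF α β p t) (rtuomgPDF α β p x) x := by
  obtain ⟨hx0, hx1⟩ := hx
  have hu0 : (0:ℝ) < x ^ β := Real.rpow_pos_of_pos hx0 β
  have hu1 : x ^ β < 1 := Real.rpow_lt_one hx0.le hx1 hβ
  have hden : (0:ℝ) < 1 - x ^ β := by linarith
  have hnum : (0:ℝ) < 1 + x ^ β := by linarith
  have hg : (0:ℝ) < (1 + x ^ β) / (1 - x ^ β) := div_pos hnum hden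
  have hω : (0:ℝ) < omegaFn α β x := Real.rpow_pos_of_pos hg _
  have hupow : HasDerivAt (fun t : ℝ => t ^ β) (β * x ^ (β - 1)) x :=
    Real.hasDerivAt_rpow_const (Or.inl hx0.ne')
  have hnumD : HasDerivAt (fun t : ℝ => 1 + t ^ β) (β * x ^ (β - 1)) x := by
    exact hupow.const_add 1
  have hdenD : HasDerivAt (fun t : ℝ => 1 - t ^ β) (-(β * x ^ (β - 1))) x := by
    exact hupow.const_sub 1
  have hgD : HasDerivAt (fun t : ℝ => (1 + t ^ β) / (1 - t ^ β))
      ((β * x ^ (β - 1) * (1 - x ^ β) - (1 + x ^ β) * -(β * x ^ (β - 1))) /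
        (1 - x ^ β) ^ 2) x :=
    hnumD.div hdenD hden.ne'
  have hωD0 := hgD.rpow_const (p := -α) (Or.inl hg.ne')
  have h2β : x ^ (2 * β) = x ^ β * x ^ β := by
    rw [two_mul, Real.rpow_add hx0]
  have hden2 : (1:ℝ) - x ^ (2 * β) = (1 - x ^ β) * (1 + x ^ β) := by rw [h2β]; ring
  have hden2pos : (0:ℝ) < 1 - x ^ (2 * β) := by rw [hden2]; positivity
  set c : ℝ := 2 * α * β * x ^ (β - 1) / (1 - x ^ (2 * β)) * omegaFn α β x with hc
  have hωD : HasDerivAt (fun t : ℝ => omegaFn α β t) (-c) x := by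
    have hpow : ((1 + x ^ β) / (1 - x ^ β)) ^ (-α - 1)
        = omegaFn α β x * ((1 - x ^ β) / (1 + x ^ β)) := by
      rw [show -α - 1 = -α + (-1) from by ring, Real.rpow_add hg,
        Real.rpow_neg_one, omegaFn, inv_div]
    have key : (β * x ^ (β - 1) * (1 - x ^ β) - (1 + x ^ β) * -(β * x ^ (β - 1))) /
        (1 - x ^ β) ^ 2 * -α * ((1 + x ^ β) / (1 - x ^ β)) ^ (-α - 1) = -c := by
      rw [hpow, hc, hden2]
      field_simp
      ring
    simpa only [omegaFn, key] using hωD0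
  have hlog : HasDerivAt (fun t : ℝ => Real.log (omegaFn α β t)) (-c / omegaFn α β x) x :=
    hωD.log hω.ne'
  have hmul : HasDerivAt (fun t : ℝ => omegaFn α β t * Real.log (omegaFn α β t))
      (-c * Real.log (omegaFn α β x) + omegaFn α β x * (-c / omegaFn α β x)) x :=
    hωD.mul hlog
  have hsum := ((hasDerivAt_const x (1:ℝ)).sub hωD).add (hmul.const_mul p)
  have hfun : (fun t => rtuomgCDF α β p t)
      = fun t => 1 - omegaFn α β t + p * (omegaFn α β t * Real.log (omegaFn α β t)) := by
    funext t; simp [rtuomgCDF, mul_assoc]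
  rw [hfun]
  convert hsum using 1
  · rfl
  · rfl
  · rfl
  rw [rtuomgPDF, ← hc]
  field_simp
  ring
end

section
/- For all α > 0, β > 0 and p ∈ [0,1], the RTUOMG distribution function F(x) = 1 − ω(x) + p·ω(x)·log ω(x) is strictly increasing on the open interval (0,1). -/
/-- `g(t) = 1 - t + p t log t` is strictly antitone on `(0,1)` for `p ∈ [0,1]`. -/
lemma gAnti (p : ℝ) (hp0 : 0 ≤ p) (hp1 : p ≤ 1) :
    StrictAntiOn (fun t : ℝ => 1 - t + p * t * Real.log t) (Set.Ioo (0:ℝ) 1) := by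
  apply strictAntiOn_of_deriv_neg (convex_Ioo 0 1)
  · apply ContinuousOn.add
    · exact (continuousOn_const.sub continuousOn_id)
    · apply ContinuousOn.mul
      · exact (continuousOn_const.mul continuousOn_id)
      · exact Real.continuousOn_log.mono (fun t ht => ht.1.ne')
  · intro t ht
    rw [interior_Ioo] at ht
    have ht0 : (0:ℝ) < t := ht.1
    have hd : HasDerivAt (fun t : ℝ => 1 - t + p * t * Real.log t)
        (-1 + p * (Real.log t + 1)) t := by
      have hm : HasDerivAt (fun t : ℝ => t * Real.log t)
          (1 * Real.log t + t * t⁻¹) t :=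
        (hasDerivAt_id t).mul (Real.hasDerivAt_log ht0.ne')
      have hm' : HasDerivAt (fun t : ℝ => t * Real.log t) (Real.log t + 1) t := by
        convert hm using 1
        field_simp
      have h1 : HasDerivAt (fun t : ℝ => 1 - t) (-1) t := by
        simpa using (hasDerivAt_id t).const_sub (1:ℝ)
      have := h1.add (hm'.const_mul p)
      have e : (fun t : ℝ => 1 - t + p * t * Real.log t)
          = (fun t : ℝ => 1 - t) + fun y => p * (y * Real.log y) := by
        funext s
        simp only [Pi.add_apply]
        ring
      rw [e]
      exact this
    rw [hd.deriv]
    have hlog : Real.log t < 0 := Real.log_neg ht0 ht.2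
    rcases hp0.eq_or_lt with h | h
    · simp [← h]
    · nlinarith [mul_neg_of_pos_of_neg h hlog]

/-- On `(0,1)`, `ω` is strictly antitone and valued in `(0,1)`. -/
lemma omega_mem (α β : ℝ) (hα : 0 < α) (hβ : 0 < β) {x : ℝ}
    (hx : x ∈ Set.Ioo (0:ℝ) 1) : omegaFn α β x ∈ Set.Ioo (0:ℝ) 1 := by
  have ha0 : 0 < x ^ β := Real.rpow_pos_of_pos hx.1 β
  have ha1 : x ^ β < 1 := Real.rpow_lt_one hx.1.le hx.2 hβ
  have hu : 1 < (1 + x ^ β) / (1 - x ^ β) := by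
    rw [lt_div_iff₀ (by linarith)]; linarith
  constructor
  · exact Real.rpow_pos_of_pos (by linarith) _
  · exact Real.rpow_lt_one_of_one_lt_of_neg hu (by linarith)

lemma omega_anti (α β : ℝ) (hα : 0 < α) (hβ : 0 < β) {x y : ℝ}
    (hx : x ∈ Set.Ioo (0:ℝ) 1) (hy : y ∈ Set.Ioo (0:ℝ) 1) (hxy : x < y) :
    omegaFn α β y < omegaFn α β x := by
  have hax : 0 < x ^ β := Real.rpow_pos_of_pos hx.1 β
  have hax1 : x ^ β < 1 := Real.rpow_lt_one hx.1.le hx.2 hβ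
  have hay : 0 < y ^ β := Real.rpow_pos_of_pos hy.1 β
  have hay1 : y ^ β < 1 := Real.rpow_lt_one hy.1.le hy.2 hβ
  have hab : x ^ β < y ^ β := Real.rpow_lt_rpow hx.1.le hxy hβ
  have hux : 1 < (1 + x ^ β) / (1 - x ^ β) := by
    rw [lt_div_iff₀ (by linarith)]; linarith
  have huxy : (1 + x ^ β) / (1 - x ^ β) < (1 + y ^ β) / (1 - y ^ β) := by
    rw [div_lt_div_iff₀ (by linarith) (by linarith)]; nlinarith
  unfold omegaFn
  have h0 : (0:ℝ) < (1 + x ^ β) / (1 - x ^ β) := by linarith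
  rw [Real.rpow_neg h0.le, Real.rpow_neg (by linarith : (0:ℝ) ≤ (1 + y ^ β) / (1 - y ^ β))]
  apply inv_strictAnti₀ (Real.rpow_pos_of_pos h0 α)
  exact Real.rpow_lt_rpow h0.le huxy hα

/-- **The RTUOMG distribution function is strictly increasing on `(0,1)`.**
For all `α > 0`, `β > 0` and `p ∈ [0,1]`, the map
`x ↦ 1 - ω(x) + p ω(x) log ω(x)` is strictly increasing on `(0,1)`. -/
theorem rtuomg_cdf_strictMonoOn (α β p : ℝ) (hα : 0 < α) (hβ : 0 < β)
    (hp : p ∈ Set.Icc (0:ℝ) 1) :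
    StrictMonoOn (fun x => rtuomgCDF α β p x) (Set.Ioo (0:ℝ) 1) := by
  intro x hx y hy hxy
  have hωx := omega_mem α β hα hβ hx
  have hωy := omega_mem α β hα hβ hy
  have hlt := omega_anti α β hα hβ hx hy hxy
  have := gAnti p hp.1 hp.2 hωy hωx hlt
  simpa [rtuomgCDF, mul_assoc] using this
end

section
/- Let α > 0, β > 0, p ∈ [0,1] and r > 0. Then the r-th moment of the RTUOMG distribution satisfies ∫₀¹ x^r f(x) dx = 2α(1−p)·∫₀¹ y^{r/β} (1−y)^{α−1} (1+y)^{−(α+1)} dy + 4pα²·∑_{k=1}^∞ (1/(2k−1))·∫₀¹ y^{r/β+2k−1} (1−y)^{α−1} (1+y)^{−(α+1)} dy, where the series on the right converges. -/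
open MeasureTheory Real Set intervalIntegral

lemma int_one_sub_rpow {s : ℝ} (hs : -1 < s) :
    IntegrableOn (fun y : ℝ => (1 - y) ^ s) (Set.Ioo 0 1) := by
  have h1 : IntervalIntegrable (fun x : ℝ => x ^ s) volume 0 1 :=
    intervalIntegral.intervalIntegrable_rpow' hs
  have h2 := (h1.comp_sub_left 1).symm
  simp only [sub_zero, sub_self] at h2
  exact (intervalIntegrable_iff_integrableOn_Ioo_of_le (by norm_num : (0:ℝ) ≤ 1)).mp h2

lemma meas_core (c α : ℝ) :
    AEStronglyMeasurable (fun y : ℝ => y ^ c * (1 - y) ^ (α - 1) * (1 + y) ^ (-(α + 1)))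
      (volume.restrict (Set.Ioo (0:ℝ) 1)) := by
  apply ContinuousOn.aestronglyMeasurable _ measurableSet_Ioo
  apply ContinuousOn.mul
  apply ContinuousOn.mul
  · exact continuousOn_id.rpow_const (fun x hx => Or.inl (ne_of_gt hx.1))
  · exact (continuousOn_const.sub continuousOn_id).rpow_const
      (fun x hx => Or.inl (by simp only [Pi.sub_apply, id]; intro h; nlinarith [hx.2, sub_eq_zero.mp h]))
  · exact (continuousOn_const.add continuousOn_id).rpow_const
      (fun x hx => Or.inl (by simp only [Pi.add_apply, id]; intro h; nlinarith [hx.1]))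

lemma core_nonneg {c α : ℝ} {y : ℝ} (hy : y ∈ Set.Ioo (0:ℝ) 1) :
    0 ≤ y ^ c * (1 - y) ^ (α - 1) * (1 + y) ^ (-(α + 1)) := by
  have h1 : (0:ℝ) < y := hy.1
  have h2 : (0:ℝ) < 1 - y := by linarith [hy.2]
  have h3 : (0:ℝ) < 1 + y := by linarith
  positivity

lemma core_le {c α : ℝ} (hα : 0 < α) (hc : 0 ≤ c) {y : ℝ} (hy : y ∈ Set.Ioo (0:ℝ) 1) :
    y ^ c * (1 - y) ^ (α - 1) * (1 + y) ^ (-(α + 1)) ≤ (1 - y) ^ (α - 1) := by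
  have h1 : (0:ℝ) < y := hy.1
  have h2 : (0:ℝ) < 1 - y := by linarith [hy.2]
  have h3 : (1:ℝ) ≤ 1 + y := by linarith
  have hyc : y ^ c ≤ 1 := Real.rpow_le_one h1.le hy.2.le hc
  have hplus : (1 + y) ^ (-(α + 1)) ≤ 1 :=
    Real.rpow_le_one_of_one_le_of_nonpos h3 (by linarith : -(α+1) ≤ 0)
  have ha : y ^ c * (1 - y) ^ (α - 1) ≤ 1 * (1 - y) ^ (α - 1) :=
    mul_le_mul_of_nonneg_right hyc (Real.rpow_nonneg h2.le _)
  calc y ^ c * (1 - y) ^ (α - 1) * (1 + y) ^ (-(α + 1))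
      ≤ 1 * (1 - y) ^ (α - 1) * 1 :=
        mul_le_mul ha hplus (Real.rpow_nonneg (by linarith) _) (by positivity)
    _ = (1 - y) ^ (α - 1) := by ring

lemma int_core {c α : ℝ} (hα : 0 < α) (hc : 0 ≤ c) :
    IntegrableOn (fun y : ℝ => y ^ c * (1 - y) ^ (α - 1) * (1 + y) ^ (-(α + 1)))
      (Set.Ioo 0 1) := by
  apply Integrable.mono' (int_one_sub_rpow (by linarith : (-1:ℝ) < α - 1)) (meas_core c α)
  filter_upwards [ae_restrict_mem measurableSet_Ioo] with y hy
  rw [Real.norm_eq_abs, abs_of_nonneg (core_nonneg hy)]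
  exact core_le hα hc hy

lemma log_le_rpow' {z ε : ℝ} (hz : 0 < z) (hε : 0 < ε) : Real.log z ≤ z ^ ε / ε := by
  have h1 : Real.log (z ^ ε) ≤ z ^ ε - 1 := Real.log_le_sub_one_of_pos (Real.rpow_pos_of_pos hz ε)
  rw [Real.log_rpow hz] at h1
  have : ε * Real.log z ≤ z ^ ε := by linarith [Real.rpow_pos_of_pos hz ε]
  calc Real.log z = (ε * Real.log z) / ε := by field_simp
    _ ≤ z ^ ε / ε := by gcongr

lemma neg_log_one_sub_le {α y : ℝ} (hα : 0 < α) (hy : y ∈ Set.Ioo (0:ℝ) 1) :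
    -Real.log (1 - y) ≤ (2/α) * (1 - y) ^ (-(α/2)) := by
  have h2 : (0:ℝ) < 1 - y := by linarith [hy.2]
  have := log_le_rpow' (z := (1-y)⁻¹) (ε := α/2) (by positivity) (by positivity)
  rw [← Real.log_inv] at *
  calc Real.log (1-y)⁻¹ ≤ ((1-y)⁻¹) ^ (α/2) / (α/2) := this
    _ = (2/α) * (1 - y) ^ (-(α/2)) := by
        rw [show ((1-y)⁻¹ : ℝ) = (1-y) ^ (-1:ℝ) from (Real.rpow_neg_one _).symm,
          ← Real.rpow_mul h2.le, show (-1:ℝ) * (α/2) = -(α/2) by ring,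
          div_eq_mul_inv, mul_comm, inv_div]

lemma L_nonneg {y : ℝ} (hy : y ∈ Set.Ioo (0:ℝ) 1) :
    0 ≤ Real.log (1 + y) - Real.log (1 - y) := by
  have h1 : Real.log (1 - y) ≤ 0 :=
    Real.log_nonpos (by linarith [hy.2]) (by linarith [hy.1])
  have h2 : 0 ≤ Real.log (1 + y) := Real.log_nonneg (by linarith [hy.1])
  linarith

lemma L_le {α y : ℝ} (hα : 0 < α) (hy : y ∈ Set.Ioo (0:ℝ) 1) :
    Real.log (1 + y) - Real.log (1 - y) ≤ 1 + (2/α) * (1 - y) ^ (-(α/2)) := by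
  have h1 : Real.log (1 + y) ≤ 1 := by
    have := Real.log_le_sub_one_of_pos (show (0:ℝ) < 1 + y by linarith [hy.1])
    linarith [hy.2]
  linarith [neg_log_one_sub_le hα hy]

lemma meas_core_log (c α : ℝ) :
    AEStronglyMeasurable
      (fun y : ℝ => y ^ c * (1 - y) ^ (α - 1) * (1 + y) ^ (-(α + 1)) *
        (Real.log (1 + y) - Real.log (1 - y)))
      (volume.restrict (Set.Ioo (0:ℝ) 1)) := by
  apply AEStronglyMeasurable.mul (meas_core c α)
  apply Measurable.aestronglyMeasurable
  exact ((measurable_const.add measurable_id).log).sub ((measurable_const.sub measurable_id).log)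

lemma int_core_log {c α : ℝ} (hα : 0 < α) (hc : 0 ≤ c) :
    IntegrableOn (fun y : ℝ => y ^ c * (1 - y) ^ (α - 1) * (1 + y) ^ (-(α + 1)) *
      (Real.log (1 + y) - Real.log (1 - y))) (Set.Ioo 0 1) := by
  have hdom : IntegrableOn
      (fun y : ℝ => (1 - y) ^ (α - 1) + (2/α) * (1 - y) ^ (α/2 - 1)) (Set.Ioo 0 1) := by
    exact (int_one_sub_rpow (by linarith)).add
      ((int_one_sub_rpow (by linarith : (-1:ℝ) < α/2 - 1)).const_mul _)
  apply Integrable.mono' hdom (meas_core_log c α)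
  filter_upwards [ae_restrict_mem measurableSet_Ioo] with y hy
  have h2 : (0:ℝ) < 1 - y := by linarith [hy.2]
  have hnn := mul_nonneg (core_nonneg (c := c) (α := α) hy) (L_nonneg hy)
  rw [Real.norm_eq_abs, abs_of_nonneg hnn]
  calc y ^ c * (1 - y) ^ (α - 1) * (1 + y) ^ (-(α + 1)) *
        (Real.log (1 + y) - Real.log (1 - y))
      ≤ (1 - y) ^ (α - 1) * (1 + (2/α) * (1 - y) ^ (-(α/2))) :=
        mul_le_mul (core_le hα hc hy) (L_le hα hy) (L_nonneg hy)
          (Real.rpow_nonneg h2.le _)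
    _ = (1 - y) ^ (α - 1) + (2/α) * ((1 - y) ^ (α - 1) * (1 - y) ^ (-(α/2))) := by ring
    _ = (1 - y) ^ (α - 1) + (2/α) * (1 - y) ^ (α/2 - 1) := by
        rw [← Real.rpow_add h2, show α - 1 + -(α/2) = α/2 - 1 by ring]

lemma pointwise_sub {α β p r y : ℝ} (hβ : 0 < β) (hy : y ∈ Set.Ioo (0:ℝ) 1) :
    |1/β * y ^ (1/β - 1)| * ((y ^ (1/β)) ^ r * rtuomgPDF α β p (y ^ (1/β))) =
    2*α*(1-p) * (y ^ (r/β) * (1-y) ^ (α-1) * (1+y) ^ (-(α+1)))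
    + 2*p*α^2 * (y ^ (r/β) * (1-y) ^ (α-1) * (1+y) ^ (-(α+1)) *
        (Real.log (1+y) - Real.log (1-y))) := by
  obtain ⟨hy0, hy1⟩ := hy
  set x := y ^ (1/β) with hxdef
  have hx0 : 0 < x := Real.rpow_pos_of_pos hy0 _
  have h1y : (0:ℝ) < 1 - y := by linarith
  have h1y' : (0:ℝ) < 1 + y := by linarith
  have hxβ : x ^ β = y := by
    rw [hxdef, ← Real.rpow_mul hy0.le, one_div, inv_mul_cancel₀ hβ.ne', Real.rpow_one]
  have hx2β : x ^ (2*β) = y * y := by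
    rw [hxdef, ← Real.rpow_mul hy0.le]
    rw [show 1/β * (2*β) = 2 by field_simp]
    rw [show (2:ℝ) = ((2:ℕ):ℝ) by norm_num, Real.rpow_natCast]
    ring
  have hxβ1 : x ^ (β - 1) = y / x := by
    rw [Real.rpow_sub hx0, hxβ, Real.rpow_one]
  have hxr : x ^ r = y ^ (r/β) := by
    rw [hxdef, ← Real.rpow_mul hy0.le, one_div, inv_mul_eq_div]
  have hyb : y ^ (1/β - 1) = x / y := by
    rw [Real.rpow_sub hy0, Real.rpow_one, hxdef]
  have hfrac : (0:ℝ) < (1 + y) / (1 - y) := by positivity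
  have hω : omegaFn α β x = (1-y) ^ α * (1+y) ^ (-α) := by
    rw [omegaFn, hxβ, Real.rpow_neg hfrac.le, Real.div_rpow h1y'.le h1y.le,
      inv_div, div_eq_mul_inv, ← Real.rpow_neg h1y'.le]
  have hlogω : Real.log (omegaFn α β x) = -α * (Real.log (1+y) - Real.log (1-y)) := by
    rw [omegaFn, hxβ, Real.log_rpow hfrac, Real.log_div h1y'.ne' h1y.ne']
  have hsplit1 : (1-y) ^ α = (1-y) ^ (α-1) * (1-y) := by
    nth_rewrite 3 [← Real.rpow_one (1-y)]
    rw [← Real.rpow_add h1y]; norm_num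
  have hsplit2 : (1+y) ^ (-α) = (1+y) ^ (-(α+1)) * (1+y) := by
    nth_rewrite 3 [← Real.rpow_one (1+y)]
    rw [← Real.rpow_add h1y']; norm_num
  rw [rtuomgPDF, hlogω, hω, hxβ1, hx2β, hxr, hyb, hsplit1, hsplit2,
    abs_of_pos (by positivity : (0:ℝ) < 1/β * (x/y))]
  have : 1 - y * y = (1-y) * (1+y) := by ring
  rw [this]
  field_simp
  ring

lemma image_rpow_Ioo {β : ℝ} (hβ : 0 < β) :
    (fun y : ℝ => y ^ (1/β)) '' Set.Ioo 0 1 = Set.Ioo 0 1 := by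
  ext x
  constructor
  · rintro ⟨y, hy, rfl⟩
    exact ⟨Real.rpow_pos_of_pos hy.1 _, Real.rpow_lt_one hy.1.le hy.2 (by positivity)⟩
  · intro hx
    refine ⟨x ^ β, ⟨Real.rpow_pos_of_pos hx.1 _, Real.rpow_lt_one hx.1.le hx.2 hβ⟩, ?_⟩
    show (x ^ β) ^ (1/β) = x
    rw [← Real.rpow_mul hx.1.le, mul_one_div, div_self hβ.ne', Real.rpow_one]

lemma subst_integral {β : ℝ} (hβ : 0 < β) (g : ℝ → ℝ) :
    ∫ x in Set.Ioo (0:ℝ) 1, g x =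
    ∫ y in Set.Ioo (0:ℝ) 1, |1/β * y ^ (1/β - 1)| * g (y ^ (1/β)) := by
  have h := integral_image_eq_integral_abs_deriv_smul (f := fun y : ℝ => y ^ (1/β))
    (s := Set.Ioo (0:ℝ) 1)
    (f' := fun y : ℝ => 1/β * y ^ (1/β - 1)) measurableSet_Ioo
    (fun y hy => (Real.hasDerivAt_rpow_const (Or.inl hy.1.ne')).hasDerivWithinAt)
    (fun a ha b hb hab => by
      simp only at hab
      have h1 : (a ^ (1/β)) ^ β = (b ^ (1/β)) ^ β := by rw [hab]
      rwa [← Real.rpow_mul ha.1.le, ← Real.rpow_mul hb.1.le, one_div,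
        inv_mul_cancel₀ hβ.ne', Real.rpow_one, Real.rpow_one] at h1) g
  rw [image_rpow_Ioo hβ] at h
  simpa [smul_eq_mul] using h

lemma hasSum_T {α c y : ℝ} (hy : y ∈ Set.Ioo (0:ℝ) 1) :
    HasSum (fun k : ℕ => (1 / (2 * ((k:ℝ) + 1) - 1)) *
        (y ^ (c + 2 * ((k:ℝ) + 1) - 1) * (1-y) ^ (α-1) * (1+y) ^ (-(α+1))))
      ((1/2) * (y ^ c * (1-y) ^ (α-1) * (1+y) ^ (-(α+1)) *
        (Real.log (1+y) - Real.log (1-y)))) := by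
  obtain ⟨hy0, hy1⟩ := hy
  have habs : |y| < 1 := by rw [abs_of_pos hy0]; exact hy1
  have h0 := Real.hasSum_log_sub_log_of_abs_lt_one habs
  have h1 := h0.mul_left ((1/2) * (y ^ c * (1-y) ^ (α-1) * (1+y) ^ (-(α+1))))
  convert h1 using 1
  · rfl
  · funext k
    have hek : c + 2 * ((k:ℝ) + 1) - 1 = c + ((2*k+1 : ℕ) : ℝ) := by push_cast; ring
    rw [hek, Real.rpow_add hy0, Real.rpow_natCast]
    have hco : 2 * ((k:ℝ) + 1) - 1 = 2 * (k:ℝ) + 1 := by ring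
    rw [hco]
    ring
  · ring

/-- **Moments of the RTUOMG distribution (Proposition 1, integral form).**
For `α > 0`, `β > 0`, `p ∈ [0,1]` and `r > 0`,
`∫₀¹ x^r f(x) dx = 2α(1-p) ∫₀¹ y^{r/β} (1-y)^{α-1} (1+y)^{-(α+1)} dy
  + 4pα² ∑_{k=1}^∞ (1/(2k-1)) ∫₀¹ y^{r/β+2k-1} (1-y)^{α-1} (1+y)^{-(α+1)} dy`,
the series on the right being convergent. -/
theorem rtuomg_moment (α β p r : ℝ) (hα : 0 < α) (hβ : 0 < β)
    (hp : p ∈ Set.Icc (0:ℝ) 1) (hr : 0 < r) :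
    Summable (fun k : ℕ => (1 / (2 * ((k : ℝ) + 1) - 1)) *
      ∫ y in (0:ℝ)..1,
        y ^ (r / β + 2 * ((k : ℝ) + 1) - 1) * (1 - y) ^ (α - 1) *
          (1 + y) ^ (-(α + 1))) ∧
    (∫ x in (0:ℝ)..1, x ^ r * rtuomgPDF α β p x) =
      2 * α * (1 - p) *
        (∫ y in (0:ℝ)..1,
          y ^ (r / β) * (1 - y) ^ (α - 1) * (1 + y) ^ (-(α + 1))) +
      4 * p * α ^ 2 *
        ∑' k : ℕ, (1 / (2 * ((k : ℝ) + 1) - 1)) *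
          ∫ y in (0:ℝ)..1,
            y ^ (r / β + 2 * ((k : ℝ) + 1) - 1) * (1 - y) ^ (α - 1) *
              (1 + y) ^ (-(α + 1)) := by
  have hμ : MeasurableSet (Set.Ioo (0:ℝ) 1) := measurableSet_Ioo
  have hc0 : 0 ≤ r / β := by positivity
  -- the summand functions with coefficient inside the integral
  set T : ℕ → ℝ → ℝ := fun k y => (1 / (2 * ((k:ℝ) + 1) - 1)) *
      (y ^ (r / β + 2 * ((k:ℝ) + 1) - 1) * (1-y) ^ (α-1) * (1+y) ^ (-(α+1))) with hT
  set Φ : ℝ → ℝ := fun y => (1/2) * (y ^ (r/β) * (1-y) ^ (α-1) * (1+y) ^ (-(α+1)) *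
      (Real.log (1+y) - Real.log (1-y))) with hΦ
  have hcoeff : ∀ k : ℕ, (0:ℝ) < 2 * ((k:ℝ) + 1) - 1 := by
    intro k; have : (0:ℝ) ≤ (k:ℝ) := Nat.cast_nonneg k; linarith
  have hTmeas : ∀ k, AEStronglyMeasurable (T k) (volume.restrict (Set.Ioo (0:ℝ) 1)) :=
    fun k => (meas_core _ α).const_mul _
  have hTnonneg : ∀ (k : ℕ), ∀ y ∈ Set.Ioo (0:ℝ) 1, 0 ≤ T k y := by
    intro k y hy
    exact mul_nonneg (one_div_pos.mpr (hcoeff k)).le (core_nonneg hy)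
  have hTsum : ∀ y ∈ Set.Ioo (0:ℝ) 1, HasSum (fun k => T k y) (Φ y) :=
    fun y hy => hasSum_T hy
  have hΦnn : 0 ≤ᵐ[volume.restrict (Set.Ioo (0:ℝ) 1)] Φ := by
    filter_upwards [ae_restrict_mem hμ] with y hy
    exact mul_nonneg (by norm_num) (mul_nonneg (core_nonneg hy) (L_nonneg hy))
  have hΦint : IntegrableOn Φ (Set.Ioo (0:ℝ) 1) := (int_core_log hα hc0).const_mul _
  have hΦlint : ∫⁻ y in Set.Ioo (0:ℝ) 1, ENNReal.ofReal (Φ y) < ⊤ :=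
    (hasFiniteIntegral_iff_ofReal hΦnn).mp hΦint.2
  have key : ∑' k, ∫⁻ y in Set.Ioo (0:ℝ) 1, (‖T k y‖₊ : ENNReal) ≠ ⊤ := by
    rw [← lintegral_tsum (f := fun k y => (‖T k y‖₊ : ENNReal)) (fun k => (hTmeas k).enorm)]
    have heq : ∀ᵐ y ∂(volume.restrict (Set.Ioo (0:ℝ) 1)),
        (∑' k, (‖T k y‖₊ : ENNReal)) = ENNReal.ofReal (Φ y) := by
      filter_upwards [ae_restrict_mem hμ] with y hy
      have h1 : ∀ k : ℕ, (‖T k y‖₊ : ENNReal) = ENNReal.ofReal (T k y) :=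
        fun k => Real.enorm_eq_ofReal (hTnonneg k y hy)
      rw [tsum_congr h1,
        ← ENNReal.ofReal_tsum_of_nonneg (fun k => hTnonneg k y hy) (hTsum y hy).summable,
        (hTsum y hy).tsum_eq]
    rw [lintegral_congr_ae heq]
    exact hΦlint.ne
  have hinterchange : ∫ y in Set.Ioo (0:ℝ) 1, Φ y
      = ∑' k, ∫ y in Set.Ioo (0:ℝ) 1, T k y := by
    rw [← MeasureTheory.integral_tsum hTmeas key]
    apply MeasureTheory.integral_congr_ae
    filter_upwards [ae_restrict_mem hμ] with y hy
    exact ((hTsum y hy).tsum_eq).symm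
  have hsummable : Summable (fun k => ∫ y in Set.Ioo (0:ℝ) 1, T k y) := by
    have h1 : ∀ k : ℕ, ∫ y in Set.Ioo (0:ℝ) 1, T k y
        = (∫⁻ y in Set.Ioo (0:ℝ) 1, (‖T k y‖₊ : ENNReal)).toReal := by
      intro k
      rw [integral_eq_lintegral_of_nonneg_ae ?_ (hTmeas k)]
      · congr 1
        apply lintegral_congr_ae
        filter_upwards [ae_restrict_mem hμ] with y hy
        exact (Real.enorm_eq_ofReal (hTnonneg k y hy)).symm
      · filter_upwards [ae_restrict_mem hμ] with y hy
        exact hTnonneg k y hy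
    exact (ENNReal.summable_toReal key).congr (fun k => (h1 k).symm)
  have hIoc : ∀ f : ℝ → ℝ, ∫ y in (0:ℝ)..1, f y = ∫ y in Set.Ioo (0:ℝ) 1, f y := by
    intro f
    rw [intervalIntegral.integral_of_le zero_le_one, integral_Ioc_eq_integral_Ioo]
  have hSk : ∀ k : ℕ, (1 / (2 * ((k:ℝ) + 1) - 1)) *
      (∫ y in (0:ℝ)..1, y ^ (r / β + 2 * ((k:ℝ) + 1) - 1) * (1-y) ^ (α-1) *
        (1+y) ^ (-(α+1)))
      = ∫ y in Set.Ioo (0:ℝ) 1, T k y := by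
    intro k
    rw [hIoc, hT]
    exact (MeasureTheory.integral_const_mul _ _).symm
  constructor
  · exact hsummable.congr (fun k => (hSk k).symm)
  · have hsub : (∫ x in (0:ℝ)..1, x ^ r * rtuomgPDF α β p x)
        = ∫ y in Set.Ioo (0:ℝ) 1,
            (2*α*(1-p) * (y ^ (r/β) * (1-y) ^ (α-1) * (1+y) ^ (-(α+1)))
            + 2*p*α^2 * (y ^ (r/β) * (1-y) ^ (α-1) * (1+y) ^ (-(α+1)) *
                (Real.log (1+y) - Real.log (1-y)))) := by
      rw [hIoc, subst_integral hβ (fun x => x ^ r * rtuomgPDF α β p x)]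
      exact setIntegral_congr_fun hμ (fun y hy => pointwise_sub hβ hy)
    rw [hsub, integral_add ((int_core hα hc0).const_mul _) ((int_core_log hα hc0).const_mul _),
      MeasureTheory.integral_const_mul, MeasureTheory.integral_const_mul]
    have hB : ∫ y in Set.Ioo (0:ℝ) 1, (y ^ (r/β) * (1-y) ^ (α-1) * (1+y) ^ (-(α+1)) *
        (Real.log (1+y) - Real.log (1-y)))
        = 2 * ∑' k, ∫ y in Set.Ioo (0:ℝ) 1, T k y := by
      rw [← hinterchange, hΦ, MeasureTheory.integral_const_mul]
      ring
    rw [hB, hIoc, tsum_congr (fun k => (hSk k).symm)]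
    ring
end

section
/- Let α > 0, β > 0, p ∈ [0,1], r > 0 and z ∈ (0,1). Then the r-th incomplete moment of the RTUOMG distribution satisfies ∫₀^z x^r f(x) dx = 2α(1−p)·∑_{i=0}^∞ ((α+1)_i (−1)^i / i!)·B_{z^β}(r/β + 1 + i, α) + 4pα²·∑_{k=1}^∞ (1/(2k−1))·∑_{i=0}^∞ ((α+1)_i (−1)^i / i!)·B_{z^β}(r/β + 2k + i, α), where all series converge. -/
/-- The incomplete Beta function `B_λ(m,n) = ∫₀^λ t^{m-1}(1-t)^{n-1} dt`. -/
noncomputable def incBeta (lam m n : ℝ) : ℝ :=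
  ∫ t in (0:ℝ)..lam, t ^ (m - 1) * (1 - t) ^ (n - 1)

open Filter Real MeasureTheory intervalIntegral

set_option maxHeartbeats 1000000

/-- coefficient without sign -/
noncomputable def pochCoef (s : ℝ) (i : ℕ) : ℝ :=
  (ascPochhammer ℝ i).eval s / (Nat.factorial i : ℝ)

lemma pochCoef_pos {s : ℝ} (hs : 0 < s) (i : ℕ) : 0 < pochCoef s i :=
  div_pos (ascPochhammer_pos i s hs) (by positivity)

lemma pochCoef_succ {s : ℝ} (i : ℕ) :
    pochCoef s (i + 1) * (i + 1) = pochCoef s i * (s + i) := by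
  unfold pochCoef
  rw [ascPochhammer_succ_eval]
  have h1 : (Nat.factorial (i+1) : ℝ) = (Nat.factorial i : ℝ) * (i+1) := by
    rw [Nat.factorial_succ]; push_cast; ring
  have h2 : (Nat.factorial i : ℝ) ≠ 0 := by positivity
  rw [h1]
  field_simp [h1]

lemma pochCoef_succ_left {s : ℝ} (i : ℕ) :
    pochCoef s (i + 1) * (i + 1) = s * pochCoef (s + 1) i := by
  unfold pochCoef
  have h1 : (Nat.factorial (i+1) : ℝ) = (Nat.factorial i : ℝ) * (i+1) := by
    rw [Nat.factorial_succ]; push_cast; ring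
  have h3 : (ascPochhammer ℝ (i+1)).eval s = s * (ascPochhammer ℝ i).eval (s+1) := by
    rw [ascPochhammer_succ_left]
    simp [Polynomial.eval_comp]
  have h2 : (Nat.factorial i : ℝ) ≠ 0 := by positivity
  rw [h1, h3]
  field_simp [h1, h3]

lemma summable_pochCoef {s : ℝ} (hs : 0 < s) {x : ℝ} (hx : |x| < 1) :
    Summable (fun i : ℕ => pochCoef s i * x ^ i) := by
  apply summable_of_ratio_norm_eventually_le (r := (1 + |x|) / 2) (by linarith)
  have htend : Tendsto (fun i : ℕ => (s + i) / (i + 1) * |x|) atTop (nhds (|x|)) := by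
    have h1 : Tendsto (fun i : ℕ => (s + i) / (i + 1)) atTop (nhds 1) := by
      have h2 : (fun i : ℕ => (s + i) / (i + 1)) = fun i : ℕ => (s - 1) * (1 / (i + 1)) + 1 := by
        funext i
        have : (i : ℝ) + 1 ≠ 0 := by positivity
        field_simp
        ring
      rw [h2]
      simpa using (tendsto_one_div_add_atTop_nhds_zero_nat.const_mul (s - 1)).add tendsto_const_nhds
    simpa using h1.mul_const |x|
  have hev : ∀ᶠ i : ℕ in atTop, (s + (i:ℝ)) / ((i:ℝ) + 1) * |x| ≤ (1 + |x|) / 2 :=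
    htend.eventually (eventually_le_nhds (by linarith))
  filter_upwards [hev] with i hi
  have hfe : ‖pochCoef s (i+1) * x ^ (i+1)‖ = (s + i) / (i+1) * |x| * ‖pochCoef s i * x ^ i‖ := by
    have hpos := pochCoef_pos hs i
    have hpos' := pochCoef_pos hs (i+1)
    have hrec := pochCoef_succ (s := s) i
    have hip : (0:ℝ) < (i:ℝ) + 1 := by positivity
    have hcp : pochCoef s (i+1) = pochCoef s i * (s + i) / (i + 1) := by
      field_simp at hrec ⊢; linarith [hrec]
    rw [norm_mul, norm_mul, hcp]
    simp only [Real.norm_eq_abs, abs_div, abs_mul, pow_succ, abs_of_pos hpos,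
      abs_of_pos (by positivity : (0:ℝ) < s + i), abs_of_pos hip]
    ring
  rw [hfe]
  have hn : (0:ℝ) ≤ ‖pochCoef s i * x ^ i‖ := norm_nonneg _
  exact mul_le_mul_of_nonneg_right hi hn

/-- signed coefficient -/
noncomputable def binomCoef (s : ℝ) (i : ℕ) : ℝ :=
  (ascPochhammer ℝ i).eval s * (-1 : ℝ) ^ i / (Nat.factorial i : ℝ)

lemma binomCoef_eq (s : ℝ) (i : ℕ) : binomCoef s i = pochCoef s i * (-1 : ℝ) ^ i := by
  unfold binomCoef pochCoef; ring

lemma abs_binomCoef {s : ℝ} (hs : 0 < s) (i : ℕ) : |binomCoef s i| = pochCoef s i := by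
  rw [binomCoef_eq, abs_mul, abs_pow, abs_neg, abs_one, one_pow, mul_one,
    abs_of_pos (pochCoef_pos hs i)]

lemma binomCoef_succ {s : ℝ} (i : ℕ) :
    binomCoef s (i + 1) * (i + 1) = -(s + i) * binomCoef s i := by
  have := pochCoef_succ (s := s) i
  rw [binomCoef_eq, binomCoef_eq, pow_succ]
  linear_combination ((-1:ℝ) ^ i * (-1)) * this

lemma summable_binomCoef {s : ℝ} (hs : 0 < s) {x : ℝ} (hx : |x| < 1) :
    Summable (fun i : ℕ => binomCoef s i * x ^ i) := by
  apply Summable.of_norm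
  have : (fun i : ℕ => ‖binomCoef s i * x ^ i‖) = fun i => pochCoef s i * |x| ^ i := by
    funext i
    rw [norm_mul, Real.norm_eq_abs, Real.norm_eq_abs, abs_binomCoef hs, abs_pow]
  rw [this]
  exact summable_pochCoef hs (by rwa [abs_abs])

/-- The real binomial series `∑ (s)_i (-1)^i/i! tⁱ = (1+t)^{-s}` for `0 ≤ t < 1`. -/
lemma hasSum_binomial {s : ℝ} (hs : 0 < s) {t : ℝ} (h0 : 0 ≤ t) (h1 : t < 1) :
    HasSum (fun i : ℕ => binomCoef s i * t ^ i) ((1 + t) ^ (-s) : ℝ) := by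
  set ρ : ℝ := (1 + t) / 2 with hρdef
  have hρ0 : 0 < ρ := by positivity
  have htρ : t < ρ := by rw [hρdef]; linarith
  have hρ1 : ρ < 1 := by rw [hρdef]; linarith
  -- the sum function
  set S : ℝ → ℝ := fun y => ∑' i : ℕ, binomCoef s i * y ^ i with hSdef
  set D : ℝ → ℝ := fun y => ∑' i : ℕ, binomCoef s i * ((i : ℝ) * y ^ (i - 1)) with hDdef
  -- summable bound for derivatives on Ioo (-ρ) ρ
  set u : ℕ → ℝ := fun i => pochCoef s i * ((i : ℝ) * ρ ^ (i - 1)) with hudef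
  have hu : Summable u := by
    rw [← summable_nat_add_iff 1]
    have heq : (fun i : ℕ => u (i + 1)) = fun i : ℕ => (s * ρ ^ i) * pochCoef (s + 1) i := by
      funext i
      simp only [hudef, Nat.add_sub_cancel]
      push_cast
      linear_combination (ρ ^ i) * pochCoef_succ_left (s := s) i
    rw [heq]
    have := (summable_pochCoef (by linarith : (0:ℝ) < s + 1)
      (by rwa [abs_of_pos hρ0] : |ρ| < 1))
    apply Summable.congr (this.mul_left s)
    intro i; ring
  have hgd : ∀ (i : ℕ) (y : ℝ), y ∈ Set.Ioo (-ρ) ρ →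
      HasDerivAt (fun z : ℝ => binomCoef s i * z ^ i)
        (binomCoef s i * ((i : ℝ) * y ^ (i - 1))) y :=
    fun i y _ => (hasDerivAt_pow i y).const_mul _
  have hbound : ∀ (i : ℕ) (y : ℝ), y ∈ Set.Ioo (-ρ) ρ →
      ‖binomCoef s i * ((i : ℝ) * y ^ (i - 1))‖ ≤ u i := by
    intro i y hy
    have hya : |y| ≤ ρ := by
      rw [abs_le]; exact ⟨hy.1.le, hy.2.le⟩
    rw [norm_mul, norm_mul, Real.norm_eq_abs, Real.norm_eq_abs, Real.norm_eq_abs,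
      abs_binomCoef hs, Nat.abs_cast, hudef]
    apply mul_le_mul_of_nonneg_left _ (pochCoef_pos hs i).le
    apply mul_le_mul_of_nonneg_left _ (Nat.cast_nonneg i)
    rw [abs_pow]
    exact pow_le_pow_left₀ (abs_nonneg y) hya _
  have hS0 : Summable fun i : ℕ => binomCoef s i * (0:ℝ) ^ i :=
    summable_binomCoef hs (by simpa using zero_lt_one)
  have hderiv : ∀ y ∈ Set.Ioo (-ρ) ρ, HasDerivAt S (D y) y := by
    intro y hy
    exact hasDerivAt_tsum_of_isPreconnected hu isOpen_Ioo (convex_Ioo _ _).isPreconnected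
      hgd hbound (Set.mem_Ioo.2 ⟨by linarith, hρ0⟩) hS0 hy
  -- key: s * S y + (1 + y) * D y = 0 on [0, t] (indeed on Ioo)
  have hkey : ∀ y ∈ Set.Ioo (-ρ) ρ, s * S y + (1 + y) * D y = 0 := by
    intro y hy
    have hyabs : |y| < 1 := by
      rw [abs_lt]; constructor <;> [linarith [hy.1]; linarith [hy.2]]
    have hSsum : HasSum (fun i : ℕ => binomCoef s i * y ^ i) (S y) :=
      (summable_binomCoef hs hyabs).hasSum
    have hDsummable : Summable (fun i : ℕ => binomCoef s i * ((i : ℝ) * y ^ (i - 1))) := by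
      apply Summable.of_norm_bounded hu
      intro i; exact hbound i y hy
    have hDsum : HasSum (fun i : ℕ => binomCoef s i * ((i : ℝ) * y ^ (i - 1))) (D y) :=
      hDsummable.hasSum
    -- T := ∑ i * c i * y^i
    have hTsummable : Summable (fun i : ℕ => (i : ℝ) * (binomCoef s i * y ^ i)) := by
      apply Summable.congr (hDsummable.mul_right y)
      intro i
      cases i with
      | zero => simp
      | succ j =>
        simp only [Nat.add_sub_cancel]
        push_cast
        ring
    set T : ℝ := ∑' i : ℕ, (i : ℝ) * (binomCoef s i * y ^ i) with hTdef
    have hTsum : HasSum (fun i : ℕ => (i : ℝ) * (binomCoef s i * y ^ i)) T := hTsummable.hasSum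
    -- shifted derivative sum
    have hDshift : HasSum (fun j : ℕ => binomCoef s (j+1) * (((j:ℝ) + 1) * y ^ j)) (D y) := by
      have h2 : HasSum (fun j : ℕ =>
          (fun i : ℕ => binomCoef s i * ((i : ℝ) * y ^ (i - 1))) (j + 1)) (D y) := by
        exact (hasSum_nat_add_iff
          (f := fun i : ℕ => binomCoef s i * ((i : ℝ) * y ^ (i - 1))) 1).mpr (by simpa using hDsum)
      simpa using h2
    -- rewrite shifted sum using recurrence
    have hDshift' : HasSum (fun j : ℕ => -(s + j) * (binomCoef s j * y ^ j)) (D y) := by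
      have hfg : (fun j : ℕ => binomCoef s (j+1) * (((j:ℝ) + 1) * y ^ j))
          = fun j : ℕ => -(s + j) * (binomCoef s j * y ^ j) := by
        funext j
        have h := binomCoef_succ (s := s) (i := j)
        linear_combination (y ^ j) * h
      rw [hfg] at hDshift
      exact hDshift
    -- D y = -s * S y - T
    have hD_eq : D y = -s * S y - T := by
      have h3 : HasSum (fun j : ℕ => -(s + j) * (binomCoef s j * y ^ j))
          (-s * S y - T) := by
        have := (hSsum.mul_left (-s)).add (hTsum.mul_left (-1))
        have hfg : (fun j : ℕ => -s * (binomCoef s j * y ^ j)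
            + -1 * ((j : ℝ) * (binomCoef s j * y ^ j)))
            = fun j : ℕ => -(s + j) * (binomCoef s j * y ^ j) := by
          funext j; ring
        rw [hfg] at this
        rw [show -s * S y - T = -s * S y + -1 * T by ring]
        exact this
      exact hDshift'.unique h3
    -- T = y * D y
    have hT_eq : T = y * D y := by
      have h4 : HasSum (fun j : ℕ => binomCoef s (j+1) * (((j:ℝ) + 1) * y ^ j) * y)
          (y * D y) := by
        have := hDshift.mul_right y
        rw [mul_comm y (D y)]
        exact this
      have h5 : HasSum (fun j : ℕ =>
          (fun i : ℕ => (i : ℝ) * (binomCoef s i * y ^ i)) (j + 1)) T := by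
        exact (hasSum_nat_add_iff
          (f := fun i : ℕ => (i : ℝ) * (binomCoef s i * y ^ i)) 1).mpr (by simpa using hTsum)
      have hfg : (fun j : ℕ => binomCoef s (j+1) * (((j:ℝ) + 1) * y ^ j) * y)
          = fun j : ℕ => (fun i : ℕ => (i : ℝ) * (binomCoef s i * y ^ i)) (j + 1) := by
        funext j
        simp only
        push_cast
        ring
      rw [hfg] at h4
      exact h5.unique h4
    have hy1 : (1 : ℝ) + y ≠ 0 := by linarith [hy.1]
    rw [hD_eq] at hT_eq ⊢
    nlinarith [hT_eq]
  -- constancy of (1+y)^s * S y on [0, t]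
  have hg0 : ∀ y ∈ Set.Icc (0:ℝ) t, ((1 + y) ^ s : ℝ) * S y = 1 := by
    have hsub : Set.Icc (0:ℝ) t ⊆ Set.Ioo (-ρ) ρ := by
      intro y hy
      exact ⟨by linarith [hy.1], by linarith [hy.2]⟩
    have hcst : ∀ y ∈ Set.Icc (0:ℝ) t,
        ((1 + y) ^ s : ℝ) * S y = ((1 + 0) ^ s : ℝ) * S 0 := by
      apply constant_of_has_deriv_right_zero
      · intro y hy
        have hy' := hsub hy
        have h1y : (0:ℝ) < 1 + y := by linarith [hy'.1]
        have hd1 : HasDerivAt (fun z : ℝ => ((1 + z) ^ s : ℝ))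
            (1 * s * (1 + y) ^ (s - 1)) y := by
          have hid : HasDerivAt (fun z : ℝ => 1 + z) 1 y := by
            simpa using (hasDerivAt_id y).const_add 1
          exact hid.rpow_const (Or.inl (ne_of_gt h1y))
        exact ((hd1.mul (hderiv y hy')).continuousAt).continuousWithinAt
      · intro y hy
        have hy' := hsub (Set.mem_Icc.2 ⟨hy.1, hy.2.le⟩)
        have h1y : (0:ℝ) < 1 + y := by linarith [hy'.1]
        have hd1 : HasDerivAt (fun z : ℝ => ((1 + z) ^ s : ℝ))
            (1 * s * (1 + y) ^ (s - 1)) y := by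
          have hid : HasDerivAt (fun z : ℝ => 1 + z) 1 y := by
            simpa using (hasDerivAt_id y).const_add 1
          exact hid.rpow_const (Or.inl (ne_of_gt h1y))
        have hd := hd1.mul (hderiv y hy')
        have hzero : 1 * s * (1 + y) ^ (s - 1) * S y + ((1 + y) ^ s : ℝ) * D y = 0 := by
          have hkeyy := hkey y hy'
          have hpow : ((1 + y) ^ s : ℝ) = (1 + y) ^ (s - 1) * (1 + y) := by
            rw [← Real.rpow_add_one (ne_of_gt h1y)]
            ring_nf
          rw [hpow]
          linear_combination ((1 + y) ^ (s - 1)) * hkeyy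
        rw [hzero] at hd
        exact hd.hasDerivWithinAt
    intro y hy
    rw [hcst y hy]
    have hS0v : S 0 = 1 := by
      have hrfl : S 0 = ∑' i : ℕ, binomCoef s i * (0:ℝ) ^ i := rfl
      rw [hrfl, tsum_eq_single 0]
      · simp [binomCoef, ascPochhammer_zero]
      · intro i hi
        simp [zero_pow hi]
    rw [hS0v]
    simp
  have hfin := hg0 t (Set.mem_Icc.2 ⟨h0, le_refl t⟩)
  have h1t : (0:ℝ) < 1 + t := by linarith
  have hSt : S t = ((1 + t) ^ (-s) : ℝ) := by
    have hne : ((1 + t) ^ s : ℝ) ≠ 0 := by positivity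
    rw [Real.rpow_neg h1t.le]
    field_simp at hfin ⊢
    linarith [hfin]
  have hhs := (summable_binomCoef hs (by rw [abs_of_nonneg h0]; exact h1)).hasSum
  have hrfl : (∑' b : ℕ, binomCoef s b * t ^ b) = S t := rfl
  rwa [hrfl, hSt] at hhs

open MeasureTheory intervalIntegral in
lemma intervalIntegrable_rpow_mul {lam q b : ℝ} (hl0 : 0 ≤ lam) (hl1 : lam < 1) (hq : -1 < q) :
    IntervalIntegrable (fun t : ℝ => t ^ q * (1 - t) ^ b) volume 0 lam := by
  apply (intervalIntegrable_rpow' hq).mul_continuousOn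
  apply ContinuousOn.rpow_const
  · exact (continuous_const.sub continuous_id).continuousOn
  · intro t ht
    rw [Set.uIcc_of_le hl0] at ht
    left
    have h2 : t ≤ lam := ht.2
    intro hcon
    nlinarith

open MeasureTheory intervalIntegral in
lemma intervalIntegrable_rpow_mul' {lam q b c : ℝ} (hl0 : 0 ≤ lam) (hl1 : lam < 1) (hq : -1 < q) :
    IntervalIntegrable (fun t : ℝ => t ^ q * (1 - t) ^ b * (1 + t) ^ c) volume 0 lam := by
  apply (intervalIntegrable_rpow_mul hl0 hl1 hq).mul_continuousOn
  apply ContinuousOn.rpow_const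
  · exact (continuous_const.add continuous_id).continuousOn
  · intro t ht
    rw [Set.uIcc_of_le hl0] at ht
    left
    have h2 : 0 ≤ t := ht.1
    intro hcon
    nlinarith

open MeasureTheory intervalIntegral in
/-- Key interchange: expanding `(1+t)^{-(α+1)}` inside the Beta-type integral. -/
lemma hasSum_incBeta_expansion {α lam m : ℝ} (hα : 0 < α) (hl0 : 0 < lam) (hl1 : lam < 1)
    (hm : 0 < m) :
    HasSum (fun i : ℕ => binomCoef (α + 1) i * incBeta lam (m + 1 + i) α)
      (∫ t in (0:ℝ)..lam, t ^ m * (1 - t) ^ (α - 1) * (1 + t) ^ (-(α + 1))) := by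
  have hα1 : (0:ℝ) < α + 1 := by linarith
  set μ := volume.restrict (Set.Ioc (0:ℝ) lam) with hμ
  set F : ℕ → ℝ → ℝ := fun i t => binomCoef (α + 1) i * (t ^ (m + i) * (1 - t) ^ (α - 1))
    with hF
  have h_int : ∀ i : ℕ, IntervalIntegrable (fun t : ℝ => t ^ (m + (i:ℝ)) * (1 - t) ^ (α - 1))
      volume 0 lam := fun i =>
    intervalIntegrable_rpow_mul hl0.le hl1
      (by have h : (0:ℝ) ≤ (i:ℝ) := Nat.cast_nonneg i; linarith)
  have hF_int : ∀ i : ℕ, Integrable (F i) μ := by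
    intro i
    rw [hμ, ← IntegrableOn, ← intervalIntegrable_iff_integrableOn_Ioc_of_le hl0.le]
    exact ((h_int i).const_mul _)
  -- nonneg pointwise facts
  have hbase_nonneg : ∀ t ∈ Set.Ioc (0:ℝ) lam, ∀ q : ℝ, 0 ≤ t ^ q * (1 - t) ^ (α - 1) := by
    intro t ht q
    have h1 : (0:ℝ) ≤ 1 - t := by nlinarith [ht.2]
    exact mul_nonneg (Real.rpow_nonneg ht.1.le q) (Real.rpow_nonneg h1 _)
  -- J : the base integral
  set J : ℝ := ∫ t in Set.Ioc (0:ℝ) lam, t ^ m * (1 - t) ^ (α - 1) with hJ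
  have hptle : ∀ i : ℕ, ∀ t ∈ Set.Ioc (0:ℝ) lam,
      t ^ (m + (i:ℝ)) * (1 - t) ^ (α - 1) ≤ lam ^ i * (t ^ m * (1 - t) ^ (α - 1)) := by
    intro i t ht
    have ht0 : 0 < t := ht.1
    have h1 : (0:ℝ) ≤ 1 - t := by nlinarith [ht.2]
    have : t ^ (m + (i:ℝ)) = t ^ m * t ^ (i:ℝ) := Real.rpow_add ht0 _ _
    rw [this]
    have h2 : t ^ (i:ℝ) ≤ lam ^ (i:ℝ) := Real.rpow_le_rpow ht0.le ht.2 (Nat.cast_nonneg i)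
    have h3 : lam ^ (i:ℝ) = lam ^ i := Real.rpow_natCast lam i
    calc t ^ m * t ^ (i:ℝ) * (1 - t) ^ (α - 1)
        ≤ t ^ m * lam ^ (i:ℝ) * (1 - t) ^ (α - 1) := by
          apply mul_le_mul_of_nonneg_right _ (Real.rpow_nonneg h1 _)
          exact mul_le_mul_of_nonneg_left h2 (Real.rpow_nonneg ht0.le _)
      _ = lam ^ i * (t ^ m * (1 - t) ^ (α - 1)) := by rw [h3]; ring
  have h_intOn : ∀ q : ℝ, -1 < q → IntegrableOn (fun t : ℝ => t ^ q * (1 - t) ^ (α - 1))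
      (Set.Ioc (0:ℝ) lam) volume := by
    intro q hq
    rw [← intervalIntegrable_iff_integrableOn_Ioc_of_le hl0.le]
    exact intervalIntegrable_rpow_mul hl0.le hl1 hq
  have hnorm_int : ∀ i : ℕ, (∫ t, ‖F i t‖ ∂μ) ≤ pochCoef (α + 1) i * lam ^ i * J := by
    intro i
    have heq : ∀ t ∈ Set.Ioc (0:ℝ) lam,
        ‖F i t‖ = pochCoef (α + 1) i * (t ^ (m + (i:ℝ)) * (1 - t) ^ (α - 1)) := by
      intro t ht
      simp only [hF]
      rw [norm_mul, Real.norm_eq_abs, Real.norm_eq_abs, abs_binomCoef hα1,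
        abs_of_nonneg (hbase_nonneg t ht _)]
    rw [hμ, MeasureTheory.setIntegral_congr_fun measurableSet_Ioc heq,
      MeasureTheory.integral_const_mul]
    have hmono : (∫ t in Set.Ioc (0:ℝ) lam, t ^ (m + (i:ℝ)) * (1 - t) ^ (α - 1))
        ≤ ∫ t in Set.Ioc (0:ℝ) lam, lam ^ i * (t ^ m * (1 - t) ^ (α - 1)) := by
      apply MeasureTheory.setIntegral_mono_on
        (h_intOn _ (by have h : (0:ℝ) ≤ (i:ℝ) := Nat.cast_nonneg i; linarith))
        ((h_intOn _ (by linarith)).const_mul _) measurableSet_Ioc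
      exact hptle i
    rw [MeasureTheory.integral_const_mul] at hmono
    calc pochCoef (α + 1) i * ∫ t in Set.Ioc (0:ℝ) lam, t ^ (m + (i:ℝ)) * (1 - t) ^ (α - 1)
        ≤ pochCoef (α + 1) i * (lam ^ i * J) :=
          mul_le_mul_of_nonneg_left hmono (pochCoef_pos hα1 i).le
      _ = pochCoef (α + 1) i * lam ^ i * J := by ring
  have hF_sum : Summable (fun i : ℕ => ∫ t, ‖F i t‖ ∂μ) := by
    apply Summable.of_nonneg_of_le
      (fun i => MeasureTheory.integral_nonneg fun t => norm_nonneg _) hnorm_int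
    have := (summable_pochCoef hα1 (x := lam) (by rw [abs_of_pos hl0]; exact hl1)).mul_right J
    apply this.congr
    intro i; ring
  have hmain := MeasureTheory.hasSum_integral_of_summable_integral_norm hF_int hF_sum
  -- identify the members
  have hterm : ∀ i : ℕ, (∫ t, F i t ∂μ) = binomCoef (α + 1) i * incBeta lam (m + 1 + i) α := by
    intro i
    rw [hμ]
    simp only [hF]
    rw [MeasureTheory.integral_const_mul]
    congr 1
    rw [incBeta, intervalIntegral.integral_of_le hl0.le,
      MeasureTheory.integral_Ioc_eq_integral_Ioo, MeasureTheory.integral_Ioc_eq_integral_Ioo]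
    apply MeasureTheory.setIntegral_congr_fun measurableSet_Ioo
    intro t ht
    rw [show m + 1 + (i:ℝ) - 1 = m + (i:ℝ) by ring]
  have htot : (∫ t, (∑' i, F i t) ∂μ)
      = ∫ t in (0:ℝ)..lam, t ^ m * (1 - t) ^ (α - 1) * (1 + t) ^ (-(α + 1)) := by
    rw [intervalIntegral.integral_of_le hl0.le, hμ]
    apply MeasureTheory.setIntegral_congr_fun measurableSet_Ioc
    intro t ht
    have ht0 : 0 < t := ht.1
    have ht1 : t < 1 := lt_of_le_of_lt ht.2 hl1
    have hbs := hasSum_binomial hα1 ht0.le ht1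
    have hmul := hbs.mul_left (t ^ m * (1 - t) ^ (α - 1))
    have hfg : (fun i : ℕ => t ^ m * (1 - t) ^ (α - 1) * (binomCoef (α + 1) i * t ^ i))
        = fun i => F i t := by
      funext i
      simp only [hF]
      rw [Real.rpow_add ht0, ← Real.rpow_natCast t i]
      ring
    rw [hfg] at hmul
    show (∑' i : ℕ, F i t) = t ^ m * (1 - t) ^ (α - 1) * (1 + t) ^ (-(α + 1))
    rw [hmul.tsum_eq]
  rw [htot] at hmain
  have hfg2 : (fun i : ℕ => ∫ t, F i t ∂μ)
      = fun i => binomCoef (α + 1) i * incBeta lam (m + 1 + i) α := funext hterm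
  rwa [hfg2] at hmain

open MeasureTheory intervalIntegral in
/-- Expanding the logarithm series inside the integral. -/
lemma hasSum_log_expansion {α lam m : ℝ} (hα : 0 < α) (hl0 : 0 < lam) (hl1 : lam < 1)
    (hm : 0 < m) :
    HasSum (fun k : ℕ => (2 * (1 / (2 * (k:ℝ) + 1))) *
        ∫ t in (0:ℝ)..lam, t ^ (m + (2 * (k:ℝ) + 1)) * (1 - t) ^ (α - 1) * (1 + t) ^ (-(α + 1)))
      (∫ t in (0:ℝ)..lam,
        t ^ m * (1 - t) ^ (α - 1) * (1 + t) ^ (-(α + 1)) *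
          (Real.log (1 + t) - Real.log (1 - t))) := by
  set μ := volume.restrict (Set.Ioc (0:ℝ) lam) with hμ
  set F : ℕ → ℝ → ℝ := fun k t => (2 * (1 / (2 * (k:ℝ) + 1))) *
      (t ^ (m + (2 * (k:ℝ) + 1)) * (1 - t) ^ (α - 1) * (1 + t) ^ (-(α + 1))) with hF
  have hexp : ∀ k : ℕ, (-1:ℝ) < m + (2 * (k:ℝ) + 1) := by
    intro k
    have h : (0:ℝ) ≤ (k:ℝ) := Nat.cast_nonneg k
    linarith
  have h_int : ∀ k : ℕ, IntervalIntegrable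
      (fun t : ℝ => t ^ (m + (2 * (k:ℝ) + 1)) * (1 - t) ^ (α - 1) * (1 + t) ^ (-(α + 1)))
      volume 0 lam := fun k => intervalIntegrable_rpow_mul' hl0.le hl1 (hexp k)
  have hF_int : ∀ k : ℕ, Integrable (F k) μ := by
    intro k
    rw [hμ, ← IntegrableOn, ← intervalIntegrable_iff_integrableOn_Ioc_of_le hl0.le]
    exact ((h_int k).const_mul _)
  set J : ℝ := ∫ t in Set.Ioc (0:ℝ) lam, t ^ m * (1 - t) ^ (α - 1) with hJ
  have hJnn : 0 ≤ J := by
    rw [hJ]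
    apply MeasureTheory.setIntegral_nonneg measurableSet_Ioc
    intro t ht
    have h1 : (0:ℝ) ≤ 1 - t := by nlinarith [ht.2]
    exact mul_nonneg (Real.rpow_nonneg ht.1.le m) (Real.rpow_nonneg h1 _)
  have h_intOn : IntegrableOn (fun t : ℝ => t ^ m * (1 - t) ^ (α - 1))
      (Set.Ioc (0:ℝ) lam) volume := by
    rw [← intervalIntegrable_iff_integrableOn_Ioc_of_le hl0.le]
    exact intervalIntegrable_rpow_mul hl0.le hl1 (by linarith)
  have hnorm_int : ∀ k : ℕ, (∫ t, ‖F k t‖ ∂μ) ≤ 2 * lam ^ (2 * k + 1) * J := by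
    intro k
    have hcknn : (0:ℝ) ≤ 2 * (1 / (2 * (k:ℝ) + 1)) := by positivity
    have heq : ∀ t ∈ Set.Ioc (0:ℝ) lam, ‖F k t‖ = F k t := by
      intro t ht
      have h1 : (0:ℝ) ≤ 1 - t := by nlinarith [ht.2]
      have h2 : (0:ℝ) ≤ 1 + t := by nlinarith [ht.1]
      rw [Real.norm_eq_abs, abs_of_nonneg]
      simp only [hF]
      have := Real.rpow_nonneg ht.1.le (m + (2 * (k:ℝ) + 1))
      have := Real.rpow_nonneg h1 (α - 1)
      have := Real.rpow_nonneg h2 (-(α + 1))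
      positivity
    rw [hμ, MeasureTheory.setIntegral_congr_fun measurableSet_Ioc heq]
    have hptle : ∀ t ∈ Set.Ioc (0:ℝ) lam,
        F k t ≤ 2 * lam ^ (2 * k + 1) * (t ^ m * (1 - t) ^ (α - 1)) := by
      intro t ht
      have ht0 : 0 < t := ht.1
      have h1 : (0:ℝ) ≤ 1 - t := by nlinarith [ht.2]
      have h2 : (1:ℝ) ≤ 1 + t := by nlinarith [ht.1]
      have hck : 2 * (1 / (2 * (k:ℝ) + 1)) ≤ 2 := by
        have hk : (1:ℝ) ≤ 2 * (k:ℝ) + 1 := by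
          have h : (0:ℝ) ≤ (k:ℝ) := Nat.cast_nonneg k
          linarith
        have h5 : (1:ℝ) / (2 * (k:ℝ) + 1) ≤ 1 := (div_le_one (by linarith)).mpr hk
        linarith
      have hpow1 : (1 + t) ^ (-(α + 1)) ≤ 1 :=
        Real.rpow_le_one_of_one_le_of_nonpos h2 (by linarith)
      have hsplit : t ^ (m + (2 * (k:ℝ) + 1)) = t ^ m * t ^ ((2 * (k:ℝ) + 1)) :=
        Real.rpow_add ht0 _ _
      have htk : t ^ ((2 * (k:ℝ) + 1)) ≤ lam ^ (2 * k + 1) := by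
        have h3 : t ^ ((2 * (k:ℝ) + 1)) ≤ lam ^ ((2 * (k:ℝ) + 1)) :=
          Real.rpow_le_rpow ht0.le ht.2 (by positivity)
        have h4 : lam ^ ((2 * (k:ℝ) + 1)) = lam ^ (2 * k + 1) := by
          rw [← Real.rpow_natCast lam (2 * k + 1)]
          push_cast
          ring_nf
        linarith [h3, h4.le]
      simp only [hF]
      have hbnn : 0 ≤ t ^ m * (1 - t) ^ (α - 1) :=
        mul_nonneg (Real.rpow_nonneg ht0.le m) (Real.rpow_nonneg h1 _)
      calc (2 * (1 / (2 * (k:ℝ) + 1))) *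
            (t ^ (m + (2 * (k:ℝ) + 1)) * (1 - t) ^ (α - 1) * (1 + t) ^ (-(α + 1)))
          ≤ 2 * (t ^ (m + (2 * (k:ℝ) + 1)) * (1 - t) ^ (α - 1) * (1 + t) ^ (-(α + 1))) := by
            apply mul_le_mul_of_nonneg_right hck
            have := Real.rpow_nonneg ht0.le (m + (2 * (k:ℝ) + 1))
            have := Real.rpow_nonneg h1 (α - 1)
            have := Real.rpow_nonneg (by linarith : (0:ℝ) ≤ 1 + t) (-(α + 1))
            positivity
        _ ≤ 2 * (t ^ (m + (2 * (k:ℝ) + 1)) * (1 - t) ^ (α - 1) * 1) := by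
            apply mul_le_mul_of_nonneg_left _ (by norm_num)
            apply mul_le_mul_of_nonneg_left hpow1
            exact mul_nonneg (Real.rpow_nonneg ht0.le _) (Real.rpow_nonneg h1 _)
        _ = 2 * (t ^ m * t ^ ((2 * (k:ℝ) + 1)) * (1 - t) ^ (α - 1)) := by
            rw [hsplit]; ring
        _ ≤ 2 * (t ^ m * lam ^ (2 * k + 1) * (1 - t) ^ (α - 1)) := by
            apply mul_le_mul_of_nonneg_left _ (by norm_num)
            apply mul_le_mul_of_nonneg_right _ (Real.rpow_nonneg h1 _)
            exact mul_le_mul_of_nonneg_left htk (Real.rpow_nonneg ht0.le _)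
        _ = 2 * lam ^ (2 * k + 1) * (t ^ m * (1 - t) ^ (α - 1)) := by ring
    have hFint' : IntegrableOn (F k) (Set.Ioc (0:ℝ) lam) volume := hF_int k
    have hmono := MeasureTheory.setIntegral_mono_on hFint'
      (h_intOn.const_mul (2 * lam ^ (2 * k + 1))) measurableSet_Ioc hptle
    exact le_trans hmono (le_of_eq (MeasureTheory.integral_const_mul _ _))
  have hF_sum : Summable (fun k : ℕ => ∫ t, ‖F k t‖ ∂μ) := by
    apply Summable.of_nonneg_of_le
      (fun k => MeasureTheory.integral_nonneg fun t => norm_nonneg _) hnorm_int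
    have hgeo : Summable (fun k : ℕ => (2 * lam * J) * (lam ^ 2) ^ k) := by
      apply Summable.mul_left
      apply summable_geometric_of_lt_one (by positivity)
      nlinarith
    apply hgeo.congr
    intro k
    rw [pow_add, pow_mul, pow_one]
    ring
  have hmain := MeasureTheory.hasSum_integral_of_summable_integral_norm hF_int hF_sum
  have hterm : ∀ k : ℕ, (∫ t, F k t ∂μ) = (2 * (1 / (2 * (k:ℝ) + 1))) *
      ∫ t in (0:ℝ)..lam, t ^ (m + (2 * (k:ℝ) + 1)) * (1 - t) ^ (α - 1) * (1 + t) ^ (-(α + 1)) := by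
    intro k
    rw [hμ]
    simp only [hF]
    rw [MeasureTheory.integral_const_mul, intervalIntegral.integral_of_le hl0.le]
  have htot : (∫ t, (∑' k, F k t) ∂μ)
      = ∫ t in (0:ℝ)..lam, t ^ m * (1 - t) ^ (α - 1) * (1 + t) ^ (-(α + 1)) *
        (Real.log (1 + t) - Real.log (1 - t)) := by
    rw [intervalIntegral.integral_of_le hl0.le, hμ]
    apply MeasureTheory.setIntegral_congr_fun measurableSet_Ioc
    intro t ht
    have ht0 : 0 < t := ht.1
    have ht1 : t < 1 := lt_of_le_of_lt ht.2 hl1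
    have habs : |t| < 1 := by rw [abs_of_pos ht0]; exact ht1
    have hls := hasSum_log_sub_log_of_abs_lt_one habs
    have hmul := hls.mul_left (t ^ m * (1 - t) ^ (α - 1) * (1 + t) ^ (-(α + 1)))
    have hfg : (fun k : ℕ => t ^ m * (1 - t) ^ (α - 1) * (1 + t) ^ (-(α + 1)) *
        ((2:ℝ) * (1 / (2 * (k:ℝ) + 1)) * t ^ (2 * k + 1))) = fun k => F k t := by
      funext k
      simp only [hF]
      rw [Real.rpow_add ht0, ← Real.rpow_natCast t (2 * k + 1)]
      push_cast
      ring
    rw [hfg] at hmul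
    show (∑' k : ℕ, F k t) = t ^ m * (1 - t) ^ (α - 1) * (1 + t) ^ (-(α + 1)) *
      (Real.log (1 + t) - Real.log (1 - t))
    rw [hmul.tsum_eq]
  rw [htot] at hmain
  have hfg2 : (fun k : ℕ => ∫ t, F k t ∂μ) = fun k : ℕ => (2 * (1 / (2 * (k:ℝ) + 1))) *
      ∫ t in (0:ℝ)..lam, t ^ (m + (2 * (k:ℝ) + 1)) * (1 - t) ^ (α - 1) * (1 + t) ^ (-(α + 1)) :=
    funext hterm
  rwa [hfg2] at hmain

open MeasureTheory intervalIntegral in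
lemma rtuomg_subst {α β p r z : ℝ} (hα : 0 < α) (hβ : 0 < β) (hr : 0 < r)
    (hz0 : 0 < z) (hz1 : z < 1) :
    (∫ x in (0:ℝ)..z, x ^ r * rtuomgPDF α β p x)
      = ∫ t in (0:ℝ)..(z ^ β), t ^ (r / β) * (1 - t) ^ (α - 1) * (1 + t) ^ (-(α + 1)) *
          (2 * α * (1 - p) + 2 * p * α ^ 2 * (Real.log (1 + t) - Real.log (1 - t))) := by
  set lam : ℝ := z ^ β with hlam
  have hlam0 : 0 < lam := Real.rpow_pos_of_pos hz0 β
  have hlam1 : lam < 1 := Real.rpow_lt_one hz0.le hz1 hβ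
  set G : ℝ → ℝ := fun t => t ^ (r / β) * (1 - t) ^ (α - 1) * (1 + t) ^ (-(α + 1)) *
      (2 * α * (1 - p) + 2 * p * α ^ 2 * (Real.log (1 + t) - Real.log (1 - t))) with hG
  have hrβ : 0 < r / β := div_pos hr hβ
  -- continuity of G on Icc 0 lam
  have hGcont : ContinuousOn G (Set.Icc 0 lam) := by
    have h1 : ∀ t ∈ Set.Icc (0:ℝ) lam, (1:ℝ) - t ≠ 0 := by
      intro t ht; nlinarith [ht.2]
    have h2 : ∀ t ∈ Set.Icc (0:ℝ) lam, (1:ℝ) + t ≠ 0 := by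
      intro t ht; nlinarith [ht.1]
    apply ContinuousOn.mul
    apply ContinuousOn.mul
    apply ContinuousOn.mul
    · exact continuousOn_id.rpow_const (fun t ht => Or.inr hrβ.le)
    · exact ((continuous_const.sub continuous_id).continuousOn).rpow_const
        (fun t ht => Or.inl (h1 t ht))
    · exact ((continuous_const.add continuous_id).continuousOn).rpow_const
        (fun t ht => Or.inl (h2 t ht))
    · apply ContinuousOn.add continuousOn_const
      apply ContinuousOn.mul continuousOn_const
      exact ContinuousOn.sub
        (((continuous_const.add continuous_id).continuousOn).log h2)
        (((continuous_const.sub continuous_id).continuousOn).log h1)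
  have himage : ∀ x ∈ Set.Icc (0:ℝ) z, x ^ β ∈ Set.Icc (0:ℝ) lam := by
    intro x hx
    exact ⟨Real.rpow_nonneg hx.1 β, Real.rpow_le_rpow hx.1 hx.2 hβ.le⟩
  -- Step 1 : rewrite the integrand
  have hstep1 : (∫ x in (0:ℝ)..z, x ^ r * rtuomgPDF α β p x)
      = ∫ x in (0:ℝ)..z, (β * x ^ (β - 1)) • G (x ^ β) := by
    apply intervalIntegral.integral_congr_ae
    apply MeasureTheory.ae_of_all
    intro x hx
    rw [Set.uIoc_of_le hz0.le] at hx
    have hx0 : 0 < x := hx.1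
    have hx1 : x < 1 := lt_of_le_of_lt hx.2 hz1
    set t : ℝ := x ^ β with ht
    have ht0 : 0 < t := Real.rpow_pos_of_pos hx0 β
    have ht1 : t < 1 := Real.rpow_lt_one hx0.le hx1 hβ
    have h1t : (0:ℝ) < 1 - t := by linarith
    have h2t : (0:ℝ) < 1 + t := by linarith
    have hA : (0:ℝ) < (1 + t) / (1 - t) := div_pos h2t h1t
    have hxr : x ^ r = t ^ (r / β) := by
      rw [ht, ← Real.rpow_mul hx0.le]
      congr 1
      field_simp
    have h2β : x ^ (2 * β) = t ^ (2:ℝ) := by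
      rw [ht, ← Real.rpow_mul hx0.le]
      congr 1
      ring
    have h2β' : x ^ (2 * β) = t * t := by
      rw [h2β, Real.rpow_two]; ring
    have homega : omegaFn α β x = (1 - t) ^ α * (1 + t) ^ (-α) := by
      rw [omegaFn, ← ht]
      rw [Real.div_rpow h2t.le h1t.le, Real.rpow_neg h1t.le α]
      rw [Real.rpow_neg h2t.le α]
      field_simp
    have hlogomega : Real.log (omegaFn α β x)
        = -α * (Real.log (1 + t) - Real.log (1 - t)) := by
      rw [omegaFn, ← ht, Real.log_rpow hA, Real.log_div h2t.ne' h1t.ne']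
    have hsub1 : (1 - t) ^ (α - 1) * (1 - t) = (1 - t) ^ α := by
      rw [← Real.rpow_add_one h1t.ne' (α - 1)]
      ring_nf
    have hsub2 : (1 + t) ^ (-(α + 1)) * (1 + t) = (1 + t) ^ (-α) := by
      rw [← Real.rpow_add_one h2t.ne' (-(α + 1))]
      ring_nf
    rw [smul_eq_mul, hG]
    simp only
    rw [rtuomgPDF, hlogomega, homega, h2β', hxr]
    have hden : 1 - t * t = (1 - t) * (1 + t) := by ring
    rw [hden, ← hsub1, ← hsub2]
    field_simp
    ring
  -- Step 2 : change of variables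
  have hstep2 : (∫ x in (0:ℝ)..z, (β * x ^ (β - 1)) • G (x ^ β))
      = ∫ t in ((0:ℝ) ^ β)..(z ^ β), G t := by
    show (∫ x in (0:ℝ)..z, (β * x ^ (β - 1)) • ((G ∘ fun y : ℝ => y ^ β) x))
      = ∫ t in ((0:ℝ) ^ β)..(z ^ β), G t
    apply intervalIntegral.integral_comp_smul_deriv''' (f := fun x => x ^ β)
      (f' := fun x => β * x ^ (β - 1))
    · intro x hx
      rw [Set.uIcc_of_le hz0.le] at hx
      exact (Real.continuousAt_rpow_const x β (Or.inr hβ.le)).continuousWithinAt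
    · intro x hx
      rw [min_eq_left hz0.le, max_eq_right hz0.le] at hx
      have hd := Real.hasDerivAt_rpow_const (x := x) (p := β) (Or.inl hx.1.ne')
      exact hd.hasDerivWithinAt
    · apply hGcont.mono
      rw [min_eq_left hz0.le, max_eq_right hz0.le]
      intro u hu
      obtain ⟨x, hx, rfl⟩ := hu
      exact himage x ⟨hx.1.le, hx.2.le⟩
    · apply (hGcont.integrableOn_Icc).mono_set
      rw [Set.uIcc_of_le hz0.le]
      intro u hu
      obtain ⟨x, hx, rfl⟩ := hu
      exact himage x hx
    · rw [Set.uIcc_of_le hz0.le]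
      rw [integrableOn_Icc_iff_integrableOn_Ioc]
      rw [← intervalIntegrable_iff_integrableOn_Ioc_of_le hz0.le]
      have hii : IntervalIntegrable (fun x : ℝ => β * x ^ (β - 1)) volume 0 z :=
        (intervalIntegrable_rpow' (by linarith)).const_mul β
      have hcc : ContinuousOn (fun x : ℝ => G (x ^ β)) (Set.uIcc (0:ℝ) z) := by
        rw [Set.uIcc_of_le hz0.le]
        apply hGcont.comp
        · intro x hx
          exact (Real.continuousAt_rpow_const x β (Or.inr hβ.le)).continuousWithinAt
        · exact himage
      exact hii.mul_continuousOn hcc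
  rw [hstep1, hstep2, Real.zero_rpow hβ.ne']


/-- **Incomplete moments of the RTUOMG distribution (Proposition 2).**
For `α > 0`, `β > 0`, `p ∈ [0,1]`, `r > 0` and `z ∈ (0,1)`,
`∫₀^z x^r f(x) dx = 2α(1-p) ∑_{i=0}^∞ ((α+1)_i (-1)^i / i!) B_{z^β}(r/β+1+i, α)
  + 4pα² ∑_{k=1}^∞ (1/(2k-1)) ∑_{i=0}^∞ ((α+1)_i (-1)^i / i!) B_{z^β}(r/β+2k+i, α)`,
all series being convergent. -/
theorem rtuomg_incomplete_moment (α β p r z : ℝ) (hα : 0 < α) (hβ : 0 < β)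
    (hp : p ∈ Set.Icc (0:ℝ) 1) (hr : 0 < r) (hz : z ∈ Set.Ioo (0:ℝ) 1) :
    Summable (fun i : ℕ =>
      ((ascPochhammer ℝ i).eval (α + 1) * (-1 : ℝ) ^ i / (Nat.factorial i : ℝ)) *
        incBeta (z ^ β) (r / β + 1 + i) α) ∧
    (∀ k : ℕ, Summable (fun i : ℕ =>
      ((ascPochhammer ℝ i).eval (α + 1) * (-1 : ℝ) ^ i / (Nat.factorial i : ℝ)) *
        incBeta (z ^ β) (r / β + 2 * ((k : ℝ) + 1) + i) α)) ∧
    Summable (fun k : ℕ => (1 / (2 * ((k : ℝ) + 1) - 1)) *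
      ∑' i : ℕ,
        ((ascPochhammer ℝ i).eval (α + 1) * (-1 : ℝ) ^ i / (Nat.factorial i : ℝ)) *
          incBeta (z ^ β) (r / β + 2 * ((k : ℝ) + 1) + i) α) ∧
    (∫ x in (0:ℝ)..z, x ^ r * rtuomgPDF α β p x) =
      2 * α * (1 - p) *
        (∑' i : ℕ,
          ((ascPochhammer ℝ i).eval (α + 1) * (-1 : ℝ) ^ i / (Nat.factorial i : ℝ)) *
            incBeta (z ^ β) (r / β + 1 + i) α) +
      4 * p * α ^ 2 *
        ∑' k : ℕ, (1 / (2 * ((k : ℝ) + 1) - 1)) *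
          ∑' i : ℕ,
            ((ascPochhammer ℝ i).eval (α + 1) * (-1 : ℝ) ^ i / (Nat.factorial i : ℝ)) *
              incBeta (z ^ β) (r / β + 2 * ((k : ℝ) + 1) + i) α := by
  obtain ⟨hz0, hz1⟩ := hz
  set lam : ℝ := z ^ β with hlam
  have hl0 : 0 < lam := Real.rpow_pos_of_pos hz0 β
  have hl1 : lam < 1 := Real.rpow_lt_one hz0.le hz1 hβ
  have hrβ : 0 < r / β := div_pos hr hβ
  -- coefficient identification
  have hcoef : ∀ i : ℕ, ((ascPochhammer ℝ i).eval (α + 1) * (-1 : ℝ) ^ i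
      / (Nat.factorial i : ℝ)) = binomCoef (α + 1) i := fun i => rfl
  -- first expansion
  have h1 := hasSum_incBeta_expansion (α := α) (lam := lam) (m := r / β) hα hl0 hl1 hrβ
  -- family of expansions
  have h2 : ∀ k : ℕ, HasSum
      (fun i : ℕ => binomCoef (α + 1) i * incBeta lam (r / β + 2 * ((k:ℝ) + 1) + i) α)
      (∫ t in (0:ℝ)..lam,
        t ^ (r / β + (2 * (k:ℝ) + 1)) * (1 - t) ^ (α - 1) * (1 + t) ^ (-(α + 1))) := by
    intro k
    have hk0 : (0:ℝ) ≤ (k:ℝ) := Nat.cast_nonneg k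
    have hm : 0 < r / β + (2 * (k:ℝ) + 1) := by linarith
    have h := hasSum_incBeta_expansion (α := α) (lam := lam)
      (m := r / β + (2 * (k:ℝ) + 1)) hα hl0 hl1 hm
    have hfun : (fun i : ℕ => binomCoef (α + 1) i *
        incBeta lam (r / β + (2 * (k:ℝ) + 1) + 1 + i) α)
        = fun i : ℕ => binomCoef (α + 1) i *
          incBeta lam (r / β + 2 * ((k:ℝ) + 1) + i) α := by
      funext i
      congr 2
      ring
    rwa [hfun] at h
  -- the log expansion
  have h3 := hasSum_log_expansion (α := α) (lam := lam) (m := r / β) hα hl0 hl1 hrβ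
  -- substitution
  have hsub := rtuomg_subst (p := p) hα hβ hr hz0 hz1
  -- split the base integral
  have hbase_int : IntervalIntegrable
      (fun t : ℝ => t ^ (r / β) * (1 - t) ^ (α - 1) * (1 + t) ^ (-(α + 1))) volume 0 lam :=
    intervalIntegrable_rpow_mul' hl0.le hl1 (by linarith)
  have hlog_cont : ContinuousOn
      (fun t : ℝ => Real.log (1 + t) - Real.log (1 - t)) (Set.uIcc (0:ℝ) lam) := by
    rw [Set.uIcc_of_le hl0.le]
    have h1 : ∀ t ∈ Set.Icc (0:ℝ) lam, (1:ℝ) - t ≠ 0 := by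
      intro t ht; nlinarith [ht.2]
    have h2 : ∀ t ∈ Set.Icc (0:ℝ) lam, (1:ℝ) + t ≠ 0 := by
      intro t ht; nlinarith [ht.1]
    exact ContinuousOn.sub
      (((continuous_const.add continuous_id).continuousOn).log h2)
      (((continuous_const.sub continuous_id).continuousOn).log h1)
  have hlog_int : IntervalIntegrable
      (fun t : ℝ => t ^ (r / β) * (1 - t) ^ (α - 1) * (1 + t) ^ (-(α + 1)) *
        (Real.log (1 + t) - Real.log (1 - t))) volume 0 lam :=
    hbase_int.mul_continuousOn hlog_cont
  have hsplit : (∫ t in (0:ℝ)..lam, t ^ (r / β) * (1 - t) ^ (α - 1) * (1 + t) ^ (-(α + 1)) *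
        (2 * α * (1 - p) + 2 * p * α ^ 2 * (Real.log (1 + t) - Real.log (1 - t))))
      = 2 * α * (1 - p) * (∫ t in (0:ℝ)..lam,
          t ^ (r / β) * (1 - t) ^ (α - 1) * (1 + t) ^ (-(α + 1)))
        + 2 * p * α ^ 2 * (∫ t in (0:ℝ)..lam,
          t ^ (r / β) * (1 - t) ^ (α - 1) * (1 + t) ^ (-(α + 1)) *
            (Real.log (1 + t) - Real.log (1 - t))) := by
    rw [← intervalIntegral.integral_const_mul, ← intervalIntegral.integral_const_mul,
      ← intervalIntegral.integral_add (hbase_int.const_mul _) (hlog_int.const_mul _)]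
    apply intervalIntegral.integral_congr
    intro t ht
    ring
  -- the goal pieces
  have hc : ∀ k : ℕ, (1 / (2 * ((k:ℝ) + 1) - 1) : ℝ) = (1 / (2 * (k:ℝ) + 1)) := by
    intro k; congr 1; ring
  refine ⟨?_, ?_, ?_, ?_⟩
  · simp only [hcoef]
    exact h1.summable
  · intro k
    simp only [hcoef]
    exact (h2 k).summable
  · simp only [hcoef]
    have hsum2 : Summable (fun k : ℕ => (1 / (2 * (k:ℝ) + 1)) *
        ∫ t in (0:ℝ)..lam,
          t ^ (r / β + (2 * (k:ℝ) + 1)) * (1 - t) ^ (α - 1) * (1 + t) ^ (-(α + 1))) := by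
      apply Summable.congr (h3.summable.mul_left (1/2 : ℝ))
      intro k
      ring
    apply Summable.congr hsum2
    intro k
    rw [(h2 k).tsum_eq, hc k]
  · simp only [hcoef]
    rw [hsub, hsplit, h1.tsum_eq]
    congr 1
    rw [← h3.tsum_eq]
    have hinner : ∀ k : ℕ, (∑' i : ℕ, binomCoef (α + 1) i *
        incBeta lam (r / β + 2 * ((k:ℝ) + 1) + i) α)
        = ∫ t in (0:ℝ)..lam,
          t ^ (r / β + (2 * (k:ℝ) + 1)) * (1 - t) ^ (α - 1) * (1 + t) ^ (-(α + 1)) :=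
      fun k => (h2 k).tsum_eq
    simp only [hinner, hc]
    have hts : (∑' k : ℕ, 2 * (1 / (2 * (k:ℝ) + 1)) *
        ∫ t in (0:ℝ)..lam,
          t ^ (r / β + (2 * (k:ℝ) + 1)) * (1 - t) ^ (α - 1) * (1 + t) ^ (-(α + 1)))
        = 2 * ∑' k : ℕ, ((1 / (2 * (k:ℝ) + 1)) *
        ∫ t in (0:ℝ)..lam,
          t ^ (r / β + (2 * (k:ℝ) + 1)) * (1 - t) ^ (α - 1) * (1 + t) ^ (-(α + 1))) := by
      rw [← tsum_mul_left]
      exact tsum_congr fun k => by ring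
    rw [hts]
    ring
end

section
/- Let α > 0, β > 0, p ∈ [0,1] and 0 < r < β. Then the r-th inverted moment of the RTUOMG distribution satisfies ∫₀¹ x^{−r} f(x) dx = 2α(1−p)·∫₀¹ y^{−r/β} (1−y)^{α−1} (1+y)^{−(α+1)} dy + 4pα²·∑_{k=1}^∞ (1/(2k−1))·∫₀¹ y^{2k−1−r/β} (1−y)^{α−1} (1+y)^{−(α+1)} dy, where the series on the right converges. -/
open MeasureTheory Set Real

lemma contOn_aux (a b c : ℝ) {s : Set ℝ} (hs : s ⊆ Set.Ioo (0:ℝ) 1) :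
    ContinuousOn (fun y : ℝ => y ^ a * (1 - y) ^ b * (1 + y) ^ c) s := by
  apply ContinuousOn.mul
  apply ContinuousOn.mul
  · exact (continuousOn_id.rpow_const fun y hy => Or.inl (ne_of_gt (hs hy).1))
  · exact ((continuousOn_const.sub continuousOn_id).rpow_const
      fun y hy => Or.inl (by have := (hs hy).2; show (1:ℝ) - y ≠ 0; intro h; linarith))
  · exact ((continuousOn_const.add continuousOn_id).rpow_const
      fun y hy => Or.inl (by have := (hs hy).1; show (1:ℝ) + y ≠ 0; intro h; linarith))

lemma intAux {s t c : ℝ} (hs : -1 < s) (ht : 0 < t) :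
    IntegrableOn (fun y : ℝ => y ^ s * (1 - y) ^ (t - 1) * (1 + y) ^ c) (Set.Ioo 0 1) := by
  have hM2 : ∀ y : ℝ, y ∈ Set.Ioo (0:ℝ) 1 → (1 + y) ^ c ≤ (1:ℝ) ^ c ⊔ (2:ℝ) ^ c := by
    intro y hy
    rcases le_or_gt c 0 with hc | hc
    · exact le_sup_of_le_left (Real.rpow_le_rpow_of_nonpos one_pos (by linarith [hy.1.le]) hc)
    · exact le_sup_of_le_right (Real.rpow_le_rpow (by linarith [hy.1.le]) (by linarith [hy.2.le]) hc.le)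
  have hM2pos : (0:ℝ) < (1:ℝ) ^ c ⊔ (2:ℝ) ^ c :=
    lt_sup_iff.2 (Or.inl (Real.rpow_pos_of_pos one_pos c))
  have key : ∀ y : ℝ, y ∈ Set.Ioo (0:ℝ) 1 →
      0 ≤ y ^ s * (1 - y) ^ (t - 1) * (1 + y) ^ c := by
    intro y hy
    have h1 : (0:ℝ) < 1 - y := by linarith [hy.2]
    have h0 := hy.1
    positivity
  have h1 : IntegrableOn (fun y : ℝ => y ^ s * (1 - y) ^ (t - 1) * (1 + y) ^ c)
      (Set.Ioo 0 (1/2)) := by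
    have hbase : IntegrableOn (fun y : ℝ => y ^ s) (Set.Ioo 0 (1/2)) := by
      have := (intervalIntegral.intervalIntegrable_rpow' (a := 0) (b := 1/2) hs)
      rw [intervalIntegrable_iff_integrableOn_Ioc_of_le (by norm_num)] at this
      exact this.mono_set Set.Ioo_subset_Ioc_self
    set M : ℝ := (((1:ℝ)/2) ^ (t-1) ⊔ (1:ℝ) ^ (t-1)) * ((1:ℝ) ^ c ⊔ (2:ℝ) ^ c) with hMdef
    refine Integrable.mono' (hbase.const_mul M) ?_ ?_
    · exact (contOn_aux s (t-1) c (fun y hy => ⟨hy.1, by linarith [hy.2]⟩)).aestronglyMeasurable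
        measurableSet_Ioo
    · refine (ae_restrict_iff' measurableSet_Ioo).2 (Filter.Eventually.of_forall ?_)
      intro y hy
      have hy2 : y ∈ Set.Ioo (0:ℝ) 1 := ⟨hy.1, by linarith [hy.2]⟩
      rw [Real.norm_eq_abs, abs_of_nonneg (key y hy2)]
      have hb1 : (1 - y) ^ (t-1) ≤ ((1:ℝ)/2) ^ (t-1) ⊔ (1:ℝ) ^ (t-1) := by
        rcases le_or_gt (t-1) 0 with h | h
        · exact le_sup_of_le_left
            (Real.rpow_le_rpow_of_nonpos (by norm_num) (by linarith [hy.2]) h)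
        · exact le_sup_of_le_right (Real.rpow_le_rpow (by linarith [hy2.2.le]) (by linarith [hy.1.le]) h.le)
      have hb2 := hM2 y hy2
      have hys : 0 ≤ y ^ s := (Real.rpow_pos_of_pos hy.1 s).le
      have h1y : (0:ℝ) ≤ (1-y) ^ (t-1) := Real.rpow_nonneg (by linarith [hy2.2.le]) _
      calc y ^ s * (1 - y) ^ (t - 1) * (1 + y) ^ c
          ≤ y ^ s * ((((1:ℝ)/2) ^ (t-1) ⊔ (1:ℝ) ^ (t-1)) * ((1:ℝ) ^ c ⊔ (2:ℝ) ^ c)) := by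
            rw [mul_assoc]
            refine mul_le_mul_of_nonneg_left ?_ hys
            exact mul_le_mul hb1 hb2 (Real.rpow_nonneg (by linarith [hy2.1.le]) c) (le_trans h1y hb1)
        _ = M * y ^ s := by rw [hMdef]; ring
  have h2 : IntegrableOn (fun y : ℝ => y ^ s * (1 - y) ^ (t - 1) * (1 + y) ^ c)
      (Set.Ioo (1/2) 1) := by
    have hbase : IntegrableOn (fun y : ℝ => (1 - y) ^ (t-1)) (Set.Ioo (1/2) 1) := by
      have h0 := (intervalIntegral.intervalIntegrable_rpow' (a := 0) (b := 1/2) (by linarith : (-1:ℝ) < t - 1))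
      have h1 := h0.comp_sub_left 1
      rw [show (1:ℝ) - 0 = 1 by norm_num, show (1:ℝ) - 1/2 = 1/2 by norm_num] at h1
      replace h1 := h1.symm
      rw [intervalIntegrable_iff_integrableOn_Ioc_of_le (by norm_num)] at h1
      exact h1.mono_set Set.Ioo_subset_Ioc_self
    set M : ℝ := (((1:ℝ)/2) ^ s ⊔ (1:ℝ) ^ s) * ((1:ℝ) ^ c ⊔ (2:ℝ) ^ c) with hMdef
    refine Integrable.mono' (hbase.const_mul M) ?_ ?_
    · exact (contOn_aux s (t-1) c (fun y hy => ⟨by linarith [hy.1], hy.2⟩)).aestronglyMeasurable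
        measurableSet_Ioo
    · refine (ae_restrict_iff' measurableSet_Ioo).2 (Filter.Eventually.of_forall ?_)
      intro y hy
      have hy2 : y ∈ Set.Ioo (0:ℝ) 1 := ⟨by linarith [hy.1], hy.2⟩
      rw [Real.norm_eq_abs, abs_of_nonneg (key y hy2)]
      have hb1 : y ^ s ≤ ((1:ℝ)/2) ^ s ⊔ (1:ℝ) ^ s := by
        rcases le_or_gt s 0 with h | h
        · exact le_sup_of_le_left (Real.rpow_le_rpow_of_nonpos (by norm_num) hy.1.le h)
        · exact le_sup_of_le_right (Real.rpow_le_rpow hy2.1.le hy2.2.le h.le)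
      have hb2 := hM2 y hy2
      have h1y : (0:ℝ) ≤ (1-y) ^ (t-1) := Real.rpow_nonneg (by linarith [hy2.2.le]) _
      calc y ^ s * (1 - y) ^ (t - 1) * (1 + y) ^ c
          ≤ (((1:ℝ)/2) ^ s ⊔ (1:ℝ) ^ s) * (1-y) ^ (t-1) * ((1:ℝ) ^ c ⊔ (2:ℝ) ^ c) := by
            refine mul_le_mul (mul_le_mul_of_nonneg_right hb1 h1y) hb2
              (Real.rpow_nonneg (by linarith [hy2.1.le]) c) ?_
            positivity
        _ = M * (1-y) ^ (t-1) := by rw [hMdef]; ring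
  have : IntegrableOn (fun y : ℝ => y ^ s * (1 - y) ^ (t - 1) * (1 + y) ^ c)
      (Set.Ioo 0 (1/2) ∪ Set.Ioo (1/2) 1 ∪ {(1/2 : ℝ)}) := by
    refine ((h1.union h2).union ?_)
    simp [IntegrableOn]
  refine this.mono_set ?_
  intro y hy
  rcases lt_trichotomy y (1/2) with h | h | h
  · exact Or.inl (Or.inl ⟨hy.1, h⟩)
  · exact Or.inr (by simp [h])
  · exact Or.inl (Or.inr ⟨h, hy.2⟩)

open MeasureTheory Set Real

lemma subst_aux {β : ℝ} (hβ : 0 < β) (G : ℝ → ℝ) :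
    ∫ y in Set.Ioo (0:ℝ) 1, G y = ∫ x in Set.Ioo (0:ℝ) 1, |β * x ^ (β - 1)| * G (x ^ β) := by
  have himg : (fun x : ℝ => x ^ β) '' Set.Ioo 0 1 = Set.Ioo 0 1 := by
    ext y
    constructor
    · rintro ⟨x, hx, rfl⟩
      exact ⟨Real.rpow_pos_of_pos hx.1 β, Real.rpow_lt_one hx.1.le hx.2 hβ⟩
    · intro hy
      refine ⟨y ^ β⁻¹, ⟨Real.rpow_pos_of_pos hy.1 _, Real.rpow_lt_one hy.1.le hy.2 (by positivity)⟩, ?_⟩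
      show (y ^ β⁻¹) ^ β = y
      rw [← Real.rpow_mul hy.1.le, inv_mul_cancel₀ hβ.ne', Real.rpow_one]
  conv_lhs => rw [← himg]
  rw [integral_image_eq_integral_abs_deriv_smul measurableSet_Ioo
    (fun x hx => (Real.hasDerivAt_rpow_const (Or.inl hx.1.ne')).hasDerivWithinAt)
    ((Real.rpow_left_injOn hβ.ne').mono (fun x hx => hx.1.le)) G]
  simp [smul_eq_mul]

open MeasureTheory Set Real

lemma pointwise_aux {α β p r : ℝ} (hβ : 0 < β) {x : ℝ}
    (hx : x ∈ Set.Ioo (0:ℝ) 1) :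
    x ^ (-r) * rtuomgPDF α β p x = |β * x ^ (β - 1)| *
      (2 * α * ((x ^ β) ^ (-(r/β)) * (1 - x ^ β) ^ (α - 1) * (1 + x ^ β) ^ (-(α + 1))) *
        ((1 - p) + p * α * (Real.log (1 + x ^ β) - Real.log (1 - x ^ β)))) := by
  obtain ⟨hx0, hx1⟩ := hx
  have hy0 : 0 < x ^ β := Real.rpow_pos_of_pos hx0 β
  have hy1 : x ^ β < 1 := Real.rpow_lt_one hx0.le hx1 hβ
  set y := x ^ β with hy
  have h1my : (0:ℝ) < 1 - y := by linarith
  have h1py : (0:ℝ) < 1 + y := by linarith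
  have hx2β : x ^ (2 * β) = y * y := by
    rw [two_mul, Real.rpow_add hx0]
  have homega : omegaFn α β x = (1 + y) ^ (-α) * (1 - y) ^ α := by
    rw [omegaFn, ← hy, Real.div_rpow h1py.le h1my.le, Real.rpow_neg h1my.le, div_eq_mul_inv, inv_inv]
  have hlog : Real.log (omegaFn α β x) =
      -α * (Real.log (1 + y) - Real.log (1 - y)) := by
    rw [omegaFn, ← hy, Real.log_rpow (by positivity), Real.log_div h1py.ne' h1my.ne']
  have hxr : x ^ (-r) = y ^ (-(r/β)) := by
    rw [hy, ← Real.rpow_mul hx0.le]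
    congr 1
    field_simp
  have hxb1 : (0:ℝ) < x ^ (β - 1) := Real.rpow_pos_of_pos hx0 _
  rw [rtuomgPDF, hxr, hx2β, hlog, homega, abs_of_pos (by positivity)]
  have e1 : (1 - y) ^ (α - 1) = (1 - y) ^ α / (1 - y) := by
    rw [Real.rpow_sub h1my, Real.rpow_one]
  have e2 : (1 + y) ^ (-(α + 1)) = (1 + y) ^ (-α) / (1 + y) := by
    rw [show -(α+1) = -α - 1 by ring, Real.rpow_sub h1py, Real.rpow_one]
  rw [e1, e2]
  have hne1 : (1:ℝ) - y * y = (1 - y) * (1 + y) := by ring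
  rw [hne1]
  field_simp
  ring

/-- **Inverted moments of the RTUOMG distribution (Proposition 3, integral form).**
For `α > 0`, `β > 0`, `p ∈ [0,1]` and `0 < r < β`,
`∫₀¹ x^{-r} f(x) dx = 2α(1-p) ∫₀¹ y^{-r/β} (1-y)^{α-1} (1+y)^{-(α+1)} dy
  + 4pα² ∑_{k=1}^∞ (1/(2k-1)) ∫₀¹ y^{2k-1-r/β} (1-y)^{α-1} (1+y)^{-(α+1)} dy`,
the series on the right being convergent. -/
theorem rtuomg_inverted_moment (α β p r : ℝ) (hα : 0 < α) (hβ : 0 < β)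
    (hp : p ∈ Set.Icc (0:ℝ) 1) (hr : 0 < r) (hrβ : r < β) :
    Summable (fun k : ℕ => (1 / (2 * ((k : ℝ) + 1) - 1)) *
      ∫ y in (0:ℝ)..1,
        y ^ (2 * ((k : ℝ) + 1) - 1 - r / β) * (1 - y) ^ (α - 1) *
          (1 + y) ^ (-(α + 1))) ∧
    (∫ x in (0:ℝ)..1, x ^ (-r) * rtuomgPDF α β p x) =
      2 * α * (1 - p) *
        (∫ y in (0:ℝ)..1,
          y ^ (-(r / β)) * (1 - y) ^ (α - 1) * (1 + y) ^ (-(α + 1))) +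
      4 * p * α ^ 2 *
        ∑' k : ℕ, (1 / (2 * ((k : ℝ) + 1) - 1)) *
          ∫ y in (0:ℝ)..1,
            y ^ (2 * ((k : ℝ) + 1) - 1 - r / β) * (1 - y) ^ (α - 1) *
              (1 + y) ^ (-(α + 1)) := by
  have hq1 : r / β < 1 := (div_lt_one hβ).2 hrβ
  have hq0 : 0 < r / β := div_pos hr hβ
  set μ := volume.restrict (Set.Ioo (0:ℝ) 1) with hμ
  set A0 : ℝ → ℝ := fun y => y ^ (-(r/β)) * (1 - y) ^ (α - 1) * (1 + y) ^ (-(α + 1)) with hA0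
  set Ak : ℕ → ℝ → ℝ := fun k y =>
    y ^ (2 * ((k:ℝ) + 1) - 1 - r/β) * (1 - y) ^ (α - 1) * (1 + y) ^ (-(α + 1)) with hAk
  set AL : ℝ → ℝ := fun y => y ^ (-(r/β)) * (1 - y) ^ (α - 1) * (1 + y) ^ (-(α + 1)) *
    (Real.log (1 + y) - Real.log (1 - y)) with hAL
  set F : ℕ → ℝ → ℝ := fun k y => (2 * (1 / (2 * ((k:ℝ) + 1) - 1))) * Ak k y with hF
  have hden : ∀ k : ℕ, (0:ℝ) < 2 * ((k:ℝ) + 1) - 1 := by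
    intro k; have : (0:ℝ) ≤ k := Nat.cast_nonneg k; linarith
  -- integrability facts
  have iA0 : IntegrableOn A0 (Set.Ioo 0 1) := intAux (by linarith) hα
  have iAk : ∀ k : ℕ, IntegrableOn (Ak k) (Set.Ioo 0 1) := by
    intro k
    have : (0:ℝ) ≤ k := Nat.cast_nonneg k
    exact intAux (by linarith) hα
  have iA2 : IntegrableOn
      (fun y : ℝ => y ^ (-(r/β)) * (1 - y) ^ (α/2 - 1) * (1 + y) ^ (-(α + 1)))
      (Set.Ioo 0 1) := intAux (by linarith) (half_pos hα)
  have measAL : AEStronglyMeasurable AL μ := by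
    refine ContinuousOn.aestronglyMeasurable ?_ measurableSet_Ioo
    refine (contOn_aux _ _ _ subset_rfl).mul (ContinuousOn.sub ?_ ?_)
    · exact ContinuousOn.log (continuousOn_const.add continuousOn_id)
        (fun y hy => by show (1:ℝ) + y ≠ 0; intro h; have := hy.1; linarith)
    · exact ContinuousOn.log (continuousOn_const.sub continuousOn_id)
        (fun y hy => by show (1:ℝ) - y ≠ 0; intro h; have := hy.2; linarith)
  have measF : ∀ k : ℕ, AEStronglyMeasurable (F k) μ := by
    intro k
    exact ((contOn_aux _ _ _ subset_rfl).aestronglyMeasurable measurableSet_Ioo).const_mul _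
  have hA0nn : ∀ y ∈ Set.Ioo (0:ℝ) 1, 0 ≤ A0 y := by
    intro y hy
    have h1 := hy.1; have h2 : (0:ℝ) < 1 - y := by linarith [hy.2]
    have h3 : (0:ℝ) < 1 + y := by linarith
    rw [hA0]; positivity
  have hLnn : ∀ y ∈ Set.Ioo (0:ℝ) 1, 0 ≤ Real.log (1 + y) - Real.log (1 - y) := by
    intro y hy
    have h1 : (0:ℝ) ≤ Real.log (1 + y) := Real.log_nonneg (by linarith [hy.1])
    have h2 : Real.log (1 - y) ≤ 0 := Real.log_nonpos (by linarith [hy.2]) (by linarith [hy.1])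
    linarith
  have hFnn : ∀ k, ∀ y ∈ Set.Ioo (0:ℝ) 1, 0 ≤ F k y := by
    intro k y hy
    have h1 := hy.1; have h2 : (0:ℝ) < 1 - y := by linarith [hy.2]
    have h3 : (0:ℝ) < 1 + y := by linarith
    have h4 := hden k
    rw [hF, hAk]; positivity
  have iAL : IntegrableOn AL (Set.Ioo 0 1) := by
    refine Integrable.mono'
      ((iA0.const_mul (Real.log 2)).add (iA2.const_mul (2/α))) measAL ?_
    refine (ae_restrict_iff' measurableSet_Ioo).2 (Filter.Eventually.of_forall ?_)
    intro y hy
    have h1my : (0:ℝ) < 1 - y := by linarith [hy.2]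
    have h1py : (0:ℝ) < 1 + y := by linarith [hy.1]
    rw [Real.norm_eq_abs, abs_of_nonneg (mul_nonneg (hA0nn y hy) (hLnn y hy))]
    have hlog1 : Real.log (1 + y) ≤ Real.log 2 :=
      Real.log_le_log h1py (by linarith [hy.2])
    have hlog2 : -Real.log (1 - y) ≤ (2/α) * (1 - y) ^ (-(α/2)) := by
      have h := Real.log_le_rpow_div (inv_nonneg.2 h1my.le) (half_pos hα)
      rw [Real.log_inv, Real.inv_rpow h1my.le, ← Real.rpow_neg h1my.le] at h
      calc -Real.log (1 - y) ≤ (1 - y) ^ (-(α/2)) / (α/2) := h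
        _ = (2/α) * (1 - y) ^ (-(α/2)) := by
            rw [div_eq_mul_inv, mul_comm]
            congr 1
            rw [← one_div, one_div_div]
    have hmerge : A0 y * (1 - y) ^ (-(α/2)) =
        y ^ (-(r/β)) * (1 - y) ^ (α/2 - 1) * (1 + y) ^ (-(α + 1)) := by
      rw [hA0]
      have : (1 - y) ^ (α - 1) * (1 - y) ^ (-(α/2)) = (1 - y) ^ (α/2 - 1) := by
        rw [← Real.rpow_add h1my, show α - 1 + -(α/2) = α/2 - 1 by ring]
      rw [← this]; ring
    calc A0 y * (Real.log (1 + y) - Real.log (1 - y))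
        ≤ A0 y * (Real.log 2 + (2/α) * (1 - y) ^ (-(α/2))) := by
          refine mul_le_mul_of_nonneg_left ?_ (hA0nn y hy)
          have := hlog2; linarith
      _ = Real.log 2 * A0 y + (2/α) * (A0 y * (1 - y) ^ (-(α/2))) := by ring
      _ = Real.log 2 * A0 y + (2/α) *
            (y ^ (-(r/β)) * (1 - y) ^ (α/2 - 1) * (1 + y) ^ (-(α + 1))) := by rw [hmerge]
  -- pointwise series
  have hS : ∀ y ∈ Set.Ioo (0:ℝ) 1, HasSum (fun k : ℕ => F k y) (AL y) := by
    intro y hy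
    have h0 := hy.1
    have habs : |y| < 1 := abs_lt.2 ⟨by linarith, hy.2⟩
    have h := (Real.hasSum_log_sub_log_of_abs_lt_one habs).mul_right
      (y ^ (-(r/β)) * (1 - y) ^ (α - 1) * (1 + y) ^ (-(α + 1)))
    have heq : (fun k : ℕ => 2 * (1 / (2 * (k:ℝ) + 1)) * y ^ (2 * k + 1) *
        (y ^ (-(r/β)) * (1 - y) ^ (α - 1) * (1 + y) ^ (-(α + 1)))) = fun k => F k y := by
      funext k
      simp only [hF, hAk]
      have hpow : (y : ℝ) ^ (2 * k + 1) * y ^ (-(r/β)) =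
          y ^ (2 * (k:ℝ) + 1 - r/β) := by
        rw [← Real.rpow_natCast y (2 * k + 1), ← Real.rpow_add h0]
        congr 1
        push_cast
        ring
      have hco : (2 * ((k:ℝ) + 1) - 1) = 2 * (k:ℝ) + 1 := by ring
      rw [hco, ← hpow]
      ring
    rw [heq] at h
    rw [show AL y = (Real.log (1 + y) - Real.log (1 - y)) * (y ^ (-(r/β)) * (1 - y) ^ (α - 1) * (1 + y) ^ (-(α + 1))) by rw [hAL]; ring]
    exact h
  -- lintegral finiteness
  have hFk_lint : ∀ k, ∫⁻ y, ‖F k y‖₊ ∂μ = ∫⁻ y, ENNReal.ofReal (F k y) ∂μ := by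
    intro k
    refine lintegral_enorm_of_ae_nonneg ?_
    exact (ae_restrict_iff' measurableSet_Ioo).2 (Filter.Eventually.of_forall (hFnn k))
  have htop : ∑' k, ∫⁻ y, ‖F k y‖₊ ∂μ ≠ ⊤ := by
    have hcong : ∀ k, ∫⁻ y, ‖F k y‖₊ ∂μ = ∫⁻ y, ENNReal.ofReal (F k y) ∂μ := hFk_lint
    rw [tsum_congr hcong, ← lintegral_tsum (fun k => ((measF k).aemeasurable).ennreal_ofReal)]
    have hptw : ∀ᵐ y ∂μ, (∑' k, ENNReal.ofReal (F k y)) = ENNReal.ofReal (AL y) := by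
      refine (ae_restrict_iff' measurableSet_Ioo).2 (Filter.Eventually.of_forall ?_)
      intro y hy
      rw [← ENNReal.ofReal_tsum_of_nonneg (fun k => hFnn k y hy) (hS y hy).summable,
        (hS y hy).tsum_eq]
    rw [lintegral_congr_ae hptw]
    have := iAL.hasFiniteIntegral
    rw [hasFiniteIntegral_iff_ofReal
      ((ae_restrict_iff' measurableSet_Ioo).2 (Filter.Eventually.of_forall
        (fun y hy => mul_nonneg (hA0nn y hy) (hLnn y hy))))] at this
    exact this.ne
  -- convert interval integrals to Ioo integrals
  have hIoc : ∀ g : ℝ → ℝ, (∫ y in (0:ℝ)..1, g y) = ∫ y in Set.Ioo (0:ℝ) 1, g y := by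
    intro g
    rw [intervalIntegral.integral_of_le zero_le_one, integral_Ioc_eq_integral_Ioo]
  -- per-term identities
  have hTk : ∀ k : ℕ, (∫ y, F k y ∂μ) = 2 * ((1 / (2 * ((k:ℝ) + 1) - 1)) *
      ∫ y in (0:ℝ)..1, y ^ (2 * ((k:ℝ) + 1) - 1 - r/β) * (1 - y) ^ (α - 1) *
        (1 + y) ^ (-(α + 1))) := by
    intro k
    rw [hIoc]
    rw [hμ]
    rw [MeasureTheory.integral_const_mul]
    rw [hAk]
    ring
  -- summability of ∫ F k
  have hsumF : Summable (fun k => ∫ y, F k y ∂μ) := by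
    have h1 : ∀ k, (∫ y, F k y ∂μ) = (∫⁻ y, ‖F k y‖₊ ∂μ).toReal := by
      intro k
      rw [integral_eq_lintegral_of_nonneg_ae
        ((ae_restrict_iff' measurableSet_Ioo).2 (Filter.Eventually.of_forall (hFnn k)))
        (measF k), hFk_lint k]
    rw [funext h1]
    exact ENNReal.summable_toReal htop
  have hsumT : Summable (fun k : ℕ => (1 / (2 * ((k : ℝ) + 1) - 1)) *
      ∫ y in (0:ℝ)..1, y ^ (2 * ((k:ℝ) + 1) - 1 - r/β) * (1 - y) ^ (α - 1) *
        (1 + y) ^ (-(α + 1))) := by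
    have := hsumF.mul_left (2⁻¹ : ℝ)
    refine this.congr ?_
    intro k
    rw [hTk k]
    ring
  refine ⟨hsumT, ?_⟩
  -- main computation
  have hsubst : (∫ x in (0:ℝ)..1, x ^ (-r) * rtuomgPDF α β p x) =
      ∫ y in Set.Ioo (0:ℝ) 1,
        2 * α * A0 y * ((1 - p) + p * α * (Real.log (1 + y) - Real.log (1 - y))) := by
    rw [hIoc]
    rw [subst_aux hβ (fun y => 2 * α * A0 y *
      ((1 - p) + p * α * (Real.log (1 + y) - Real.log (1 - y))))]
    refine setIntegral_congr_fun measurableSet_Ioo ?_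
    intro x hx
    exact pointwise_aux hβ hx
  have hsplit : (∫ y in Set.Ioo (0:ℝ) 1,
      2 * α * A0 y * ((1 - p) + p * α * (Real.log (1 + y) - Real.log (1 - y)))) =
      2 * α * (1 - p) * (∫ y in Set.Ioo (0:ℝ) 1, A0 y) +
      2 * p * α ^ 2 * (∫ y in Set.Ioo (0:ℝ) 1, AL y) := by
    have heq : ∀ y ∈ Set.Ioo (0:ℝ) 1,
        2 * α * A0 y * ((1 - p) + p * α * (Real.log (1 + y) - Real.log (1 - y))) =
        (2 * α * (1 - p)) * A0 y + (2 * p * α ^ 2) * AL y := by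
      intro y hy
      rw [hAL, hA0]
      ring
    rw [setIntegral_congr_fun measurableSet_Ioo heq]
    rw [MeasureTheory.integral_add ((iA0.const_mul _)) ((iAL.const_mul _)),
      MeasureTheory.integral_const_mul, MeasureTheory.integral_const_mul]
  have hseries : (∫ y in Set.Ioo (0:ℝ) 1, AL y) =
      2 * ∑' k : ℕ, (1 / (2 * ((k : ℝ) + 1) - 1)) *
        ∫ y in (0:ℝ)..1, y ^ (2 * ((k:ℝ) + 1) - 1 - r/β) * (1 - y) ^ (α - 1) *
          (1 + y) ^ (-(α + 1)) := by
    have h1 : (∫ y in Set.Ioo (0:ℝ) 1, AL y) = ∫ y, (∑' k, F k y) ∂μ := by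
      rw [hμ]
      refine setIntegral_congr_fun measurableSet_Ioo ?_
      intro y hy
      exact ((hS y hy).tsum_eq).symm
    rw [h1, MeasureTheory.integral_tsum measF htop, tsum_congr hTk, tsum_mul_left]
  rw [hsubst, hsplit, hseries, hIoc]
  ring
end

section
/- Let β > 0, p ∈ [0,1] and 0 < α₂ ≤ α₁. Then for every x ∈ (0,1), the RTUOMG distribution functions satisfy F(x; α₂, β, p) ≤ F(x; α₁, β, p); equivalently, the RTUOMG distribution with the larger shape parameter α₁ is stochastically smaller than the one with α₂ (the RTUOMG distribution function is nondecreasing in α). -/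
lemma rtuomg_aux_anti (p : ℝ) (hp0 : 0 ≤ p) (hp1 : p ≤ 1) :
    AntitoneOn (fun s : ℝ => Real.exp (-s) * (1 + p * s)) (Set.Ici 0) := by
  have hderiv : ∀ s : ℝ, HasDerivAt (fun s : ℝ => Real.exp (-s) * (1 + p * s))
      (Real.exp (-s) * (p - 1 - p * s)) s := by
    intro s
    have h1 : HasDerivAt (fun s : ℝ => Real.exp (-s)) (-Real.exp (-s)) s := by
      simpa [Function.comp_def] using (Real.hasDerivAt_exp (-s)).comp s (hasDerivAt_neg s)
    have h2 : HasDerivAt (fun s : ℝ => 1 + p * s) p s := by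
      simpa using ((hasDerivAt_id s).const_mul p).const_add 1
    have := h1.mul h2
    exact this.congr_deriv (by ring)
  apply antitoneOn_of_deriv_nonpos (convex_Ici 0)
  · exact (Continuous.mul (Real.continuous_exp.comp continuous_neg)
      (by continuity)).continuousOn
  · intro s _
    exact (hderiv s).differentiableAt.differentiableWithinAt
  · intro s hs
    rw [(hderiv s).deriv]
    have hs' : 0 ≤ s := le_of_lt (by simpa using hs)
    have : p - 1 - p * s ≤ 0 := by nlinarith
    exact mul_nonpos_of_nonneg_of_nonpos (Real.exp_pos _).le this

/-- **Stochastic ordering in the shape parameter `α`.**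
For `β > 0`, `p ∈ [0,1]` and `0 < α₂ ≤ α₁`, the RTUOMG distribution functions
satisfy `F(x; α₂, β, p) ≤ F(x; α₁, β, p)` for every `x ∈ (0,1)`; i.e. the
RTUOMG distribution with the larger shape parameter is stochastically smaller. -/
theorem rtuomg_stochastic_order (β p α₁ α₂ : ℝ) (hβ : 0 < β)
    (hp : p ∈ Set.Icc (0:ℝ) 1) (hα₂ : 0 < α₂) (hα : α₂ ≤ α₁) :
    ∀ x ∈ Set.Ioo (0:ℝ) 1, rtuomgCDF α₂ β p x ≤ rtuomgCDF α₁ β p x := by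
  intro x hx
  obtain ⟨hx0, hx1⟩ := hx
  obtain ⟨hp0, hp1⟩ := hp
  have hu0 : 0 < x ^ β := Real.rpow_pos_of_pos hx0 β
  have hu1 : x ^ β < 1 := Real.rpow_lt_one hx0.le hx1 hβ
  set t : ℝ := (1 + x ^ β) / (1 - x ^ β) with ht_def
  have ht1 : 1 < t := by
    rw [ht_def, lt_div_iff₀ (by linarith)]
    linarith
  have ht0 : 0 < t := lt_trans one_pos ht1
  have hL : 0 < Real.log t := Real.log_pos ht1
  -- rewrite the CDF
  have hcdf : ∀ α : ℝ, rtuomgCDF α β p x =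
      1 - Real.exp (-(α * Real.log t)) * (1 + p * (α * Real.log t)) := by
    intro α
    have hω : omegaFn α β x = Real.exp (-(α * Real.log t)) := by
      rw [omegaFn, ← ht_def, Real.rpow_def_of_pos ht0]
      ring_nf
    have hlog : Real.log (omegaFn α β x) = -(α * Real.log t) := by
      rw [hω, Real.log_exp]
    rw [rtuomgCDF, hω, Real.log_exp]
    ring
  rw [hcdf α₁, hcdf α₂]
  have key := rtuomg_aux_anti p hp0 hp1
    (Set.mem_Ici.mpr (mul_nonneg hα₂.le hL.le))
    (Set.mem_Ici.mpr (mul_nonneg (hα₂.trans_le hα).le hL.le))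
    (mul_le_mul_of_nonneg_right hα hL.le)
  simpa using sub_le_sub_left key 1
end

section
/- Let β > 0, 0 ≤ p ≤ 1/2 and 0 < α₂ < α₁. Then the likelihood ratio x ↦ f(x; α₁, β, p) / f(x; α₂, β, p) of the RTUOMG densities is nonincreasing on the interval (0,1); that is, the RTUOMG(α₁, β, p) distribution is smaller than the RTUOMG(α₂, β, p) distribution in the likelihood ratio order. -/
private lemma rtuomg_aux_antitone (δ A a b : ℝ) (hδ : 0 < δ) (hA : 0 < A)
    (hb : 0 ≤ b) (hab : b ≤ a) (hkey : A * (a - b) ≤ δ * (A * A)) :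
    AntitoneOn (fun t => Real.exp (-(δ * t)) * (A + a * t) / (A + b * t))
      (Set.Ici (0:ℝ)) := by
  have hden : ∀ t : ℝ, 0 ≤ t → 0 < A + b * t := fun t ht => by nlinarith
  have hd : ∀ t : ℝ, 0 < A + b * t →
      HasDerivAt (fun t => Real.exp (-(δ * t)) * (A + a * t) / (A + b * t))
        ((((Real.exp (-(δ * t)) * (-δ)) * (A + a * t) + Real.exp (-(δ * t)) * a) *
            (A + b * t) - Real.exp (-(δ * t)) * (A + a * t) * b) / (A + b * t) ^ 2) t := by
    intro t ht
    have h1 : HasDerivAt (fun t : ℝ => -(δ * t)) (-δ) t := by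
      simpa [Pi.neg_def] using ((hasDerivAt_id t).const_mul δ).neg
    have h2 := h1.exp
    have h3 : HasDerivAt (fun t : ℝ => A + a * t) a t := by
      simpa using ((hasDerivAt_id t).const_mul a).const_add A
    have h4 : HasDerivAt (fun t : ℝ => A + b * t) b t := by
      simpa using ((hasDerivAt_id t).const_mul b).const_add A
    exact (h2.mul h3).div h4 (ne_of_gt ht)
  apply antitoneOn_of_deriv_nonpos (convex_Ici 0)
  · intro t ht
    exact ((hd t (hden t ht)).continuousAt).continuousWithinAt
  · intro t ht
    rw [interior_Ici] at ht
    exact ((hd t (hden t (le_of_lt ht))).differentiableAt).differentiableWithinAt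
  · intro t ht
    rw [interior_Ici] at ht
    have ht' : (0:ℝ) < t := ht
    have hdt := hd t (hden t ht'.le)
    rw [hdt.deriv]
    apply div_nonpos_of_nonpos_of_nonneg _ (sq_nonneg _)
    have hE : 0 < Real.exp (-(δ * t)) := Real.exp_pos _
    have key : A * (a - b) ≤ δ * ((A + a * t) * (A + b * t)) := by
      nlinarith [hkey,
        mul_nonneg hδ.le (mul_nonneg (mul_nonneg (hb.trans hab) hb) (mul_nonneg ht'.le ht'.le)),
        mul_nonneg hδ.le (mul_nonneg (mul_nonneg hA.le (by linarith : (0:ℝ) ≤ a + b)) ht'.le)]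
    have heq : ((Real.exp (-(δ * t)) * (-δ)) * (A + a * t) + Real.exp (-(δ * t)) * a) *
            (A + b * t) - Real.exp (-(δ * t)) * (A + a * t) * b
        = Real.exp (-(δ * t)) * (A * (a - b) - δ * ((A + a * t) * (A + b * t))) := by ring
    rw [heq]
    exact mul_nonpos_of_nonneg_of_nonpos hE.le (by linarith)

private lemma rtuomg_pdf_eq (α β p x : ℝ) (hβ : 0 < β) (hx : x ∈ Set.Ioo (0:ℝ) 1) :
    rtuomgPDF α β p x =
      (2 * β * x ^ (β - 1) / (1 - x ^ (2 * β))) *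
        (α * Real.exp (-(α * Real.log ((1 + x ^ β) / (1 - x ^ β)))) *
          ((1 - p) + p * (α * Real.log ((1 + x ^ β) / (1 - x ^ β))))) := by
  obtain ⟨hx0, hx1⟩ := hx
  have hu0 : 0 < x ^ β := Real.rpow_pos_of_pos hx0 β
  have hu1 : x ^ β < 1 := Real.rpow_lt_one hx0.le hx1 hβ
  have hr : 0 < (1 + x ^ β) / (1 - x ^ β) := div_pos (by linarith) (by linarith)
  have hω : omegaFn α β x = Real.exp (-(α * Real.log ((1 + x ^ β) / (1 - x ^ β)))) := by
    rw [omegaFn, Real.rpow_def_of_pos hr]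
    congr 1; ring
  have hlog : Real.log (omegaFn α β x) = -(α * Real.log ((1 + x ^ β) / (1 - x ^ β))) := by
    rw [omegaFn, Real.log_rpow hr]; ring
  rw [rtuomgPDF, hlog, hω]; ring

/-- **Likelihood ratio ordering in the shape parameter `α`.**
For `β > 0`, `0 ≤ p ≤ 1/2` and `0 < α₂ < α₁`, the likelihood ratio
`x ↦ f(x; α₁, β, p) / f(x; α₂, β, p)` is nonincreasing on `(0,1)`;
i.e. RTUOMG(α₁, β, p) is smaller than RTUOMG(α₂, β, p) in the likelihood
ratio order. -/
theorem rtuomg_likelihood_ratio_order (β p α₁ α₂ : ℝ) (hβ : 0 < β)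
    (hp0 : 0 ≤ p) (hp1 : p ≤ 1 / 2) (hα₂ : 0 < α₂) (hα : α₂ < α₁) :
    AntitoneOn (fun x => rtuomgPDF α₁ β p x / rtuomgPDF α₂ β p x)
      (Set.Ioo (0:ℝ) 1) := by
  have hα₁ : 0 < α₁ := lt_trans hα₂ hα
  have hA : 0 < 1 - p := by linarith
  set τ : ℝ → ℝ := fun x => Real.log ((1 + x ^ β) / (1 - x ^ β)) with hτdef
  -- basic facts about u = x^β on (0,1)
  have huprop : ∀ x ∈ Set.Ioo (0:ℝ) 1, 0 < x ^ β ∧ x ^ β < 1 := by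
    intro x hx
    exact ⟨Real.rpow_pos_of_pos hx.1 β, Real.rpow_lt_one hx.1.le hx.2 hβ⟩
  have hτ0 : ∀ x ∈ Set.Ioo (0:ℝ) 1, 0 ≤ τ x := by
    intro x hx
    obtain ⟨hu0, hu1⟩ := huprop x hx
    apply Real.log_nonneg
    rw [le_div_iff₀ (by linarith)]
    linarith
  have hτmono : ∀ x ∈ Set.Ioo (0:ℝ) 1, ∀ y ∈ Set.Ioo (0:ℝ) 1, x ≤ y → τ x ≤ τ y := by
    intro x hx y hy hxy
    obtain ⟨hu0, hu1⟩ := huprop x hx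
    obtain ⟨hv0, hv1⟩ := huprop y hy
    have huv : x ^ β ≤ y ^ β := Real.rpow_le_rpow hx.1.le hxy hβ.le
    apply Real.log_le_log (div_pos (by linarith) (by linarith))
    rw [div_le_div_iff₀ (by linarith) (by linarith)]
    nlinarith
  -- the ratio in terms of τ
  have hratio : ∀ x ∈ Set.Ioo (0:ℝ) 1,
      rtuomgPDF α₁ β p x / rtuomgPDF α₂ β p x =
        (α₁ / α₂) * (Real.exp (-((α₁ - α₂) * τ x)) * ((1 - p) + p * α₁ * τ x) /
          ((1 - p) + p * α₂ * τ x)) := by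
    intro x hx
    obtain ⟨hu0, hu1⟩ := huprop x hx
    have hC : 0 < 2 * β * x ^ (β - 1) / (1 - x ^ (2 * β)) := by
      apply div_pos
      · have := Real.rpow_pos_of_pos hx.1 (β - 1)
        positivity
      · have : x ^ (2 * β) < 1 := Real.rpow_lt_one hx.1.le hx.2 (by linarith)
        linarith
    rw [rtuomg_pdf_eq α₁ β p x hβ hx, rtuomg_pdf_eq α₂ β p x hβ hx,
      mul_div_mul_left _ _ (ne_of_gt hC)]
    have ht0 := hτ0 x hx
    have hD₂ : 0 < (1 - p) + p * (α₂ * τ x) := by nlinarith [mul_nonneg (mul_nonneg hp0 hα₂.le) ht0]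
    have hE₂ : Real.exp (-(α₂ * τ x)) ≠ 0 := (Real.exp_pos _).ne'
    have hsplit : Real.exp (-(α₁ * τ x)) =
        Real.exp (-((α₁ - α₂) * τ x)) * Real.exp (-(α₂ * τ x)) := by
      rw [← Real.exp_add]; congr 1; ring
    rw [hsplit]
    have hD₂' : ((1 - p) + p * (α₂ * τ x)) ≠ 0 := ne_of_gt hD₂
    simp only [hτdef] at hD₂' ⊢
    field_simp
  -- conclude
  intro x hx y hy hxy
  simp only
  rw [hratio x hx, hratio y hy]
  apply mul_le_mul_of_nonneg_left _ (div_nonneg hα₁.le hα₂.le)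
  have hanti := rtuomg_aux_antitone (α₁ - α₂) (1 - p) (p * α₁) (p * α₂)
    (by linarith) hA (by positivity) (by nlinarith)
    (by nlinarith [mul_nonneg (mul_nonneg (sub_nonneg.2 hα.le) hA.le) (by linarith : (0:ℝ) ≤ 1 - 2*p)])
  have := hanti (hτ0 x hx) (hτ0 y hy) (hτmono x hx y hy hxy)
  simpa using this
end
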